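/- arXiv:1508.00522 — 3 statements merged into one kernel-verified Lean document; each statement's English description precedes it below -/
import Mathlib

section
/- Let M : H(n) → ℝ^m be an r-complete measurement. Then there exists a constant C > 0, independent of the error scale, such that for every ε > 0, every X_r ∈ S_r^n, and every Hermitian E with ‖M(E)‖₂ ≤ ε, the following holds with b := M(X_r + E): every Y that minimizes tr(Y) over the set {Y ∈ H(n) : Y ⪰ 0 and ‖M(Y) − b‖₂ ≤ ε} satisfies ‖Y − X_r‖₂ ≤ C·ε. -/
open Matrix
open scoped ComplexOrder

noncomputable section

/-- The Frobenius norm `‖X‖₂` of a complex matrix. -/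
def frobNorm {n : ℕ} (X : Matrix (Fin n) (Fin n) ℂ) : ℝ :=
  Real.sqrt (∑ i, ∑ j, Complex.normSq (X i j))

def rComplete {n : ℕ} {ι : Type*} [Fintype ι]
    (M : Matrix (Fin n) (Fin n) ℂ →ₗ[ℝ] EuclideanSpace ℝ ι) (r : ℕ) : Prop :=
  ∀ X X' : Matrix (Fin n) (Fin n) ℂ, X.PosSemidef → X.rank ≤ r → X'.PosSemidef →
    X ≠ X' → M X ≠ M X'

variable {n r : ℕ}

lemma frob_nonneg (X : Matrix (Fin n) (Fin n) ℂ) : 0 ≤ frobNorm X := Real.sqrt_nonneg _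

lemma frob_pos {X : Matrix (Fin n) (Fin n) ℂ} (hX : X ≠ 0) : 0 < frobNorm X := by
  apply Real.sqrt_pos.2
  obtain ⟨i, j, hij⟩ : ∃ i j, X i j ≠ 0 := by
    by_contra h; push_neg at h; exact hX (by ext i j; simp [h])
  have : 0 < Complex.normSq (X i j) := Complex.normSq_pos.2 hij
  have h1 : 0 < ∑ j, Complex.normSq (X i j) :=
    Finset.sum_pos' (fun _ _ => Complex.normSq_nonneg _) ⟨j, Finset.mem_univ _, this⟩
  exact Finset.sum_pos' (fun _ _ => Finset.sum_nonneg fun _ _ => Complex.normSq_nonneg _)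
    ⟨i, Finset.mem_univ _, h1⟩

lemma frob_smul (a : ℝ) (X : Matrix (Fin n) (Fin n) ℂ) :
    frobNorm (a • X) = |a| * frobNorm X := by
  unfold frobNorm
  have : ∀ i j, Complex.normSq ((a • X) i j) = a^2 * Complex.normSq (X i j) := by
    intro i j
    rw [Matrix.smul_apply, Complex.real_smul, Complex.normSq_mul, Complex.normSq_ofReal]
    ring
  simp_rw [this, ← Finset.mul_sum]
  rw [Real.sqrt_mul (sq_nonneg a), Real.sqrt_sq_eq_abs]


lemma quadForm {D : Matrix (Fin n) (Fin n) ℂ} (hD : D.IsHermitian) (c : Fin n → ℂ) :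
    dotProduct (star ((hD.eigenvectorUnitary : Matrix (Fin n) (Fin n) ℂ) *ᵥ c))
      (D *ᵥ ((hD.eigenvectorUnitary : Matrix (Fin n) (Fin n) ℂ) *ᵥ c))
    = ∑ i, (hD.eigenvalues i : ℂ) * Complex.normSq (c i) := by
  set U : Matrix (Fin n) (Fin n) ℂ := (hD.eigenvectorUnitary : Matrix (Fin n) (Fin n) ℂ)
  rw [mulVec_mulVec, star_mulVec, dotProduct_mulVec, vecMul_vecMul]
  have h1 : Uᴴ * (D * U) = diagonal (RCLike.ofReal ∘ hD.eigenvalues) := by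
    rw [← mul_assoc, ← Matrix.star_eq_conjTranspose]
    have h := hD.conjStarAlgAut_star_eigenvectorUnitary
    simpa [Unitary.conjStarAlgAut_apply] using h
  rw [h1]
  simp only [dotProduct, Matrix.vecMul_diagonal, Function.comp_apply, Pi.star_apply]
  refine Finset.sum_congr rfl fun i _ => ?_
  have : c i * star (c i) = (Complex.normSq (c i) : ℂ) := Complex.mul_conj (c i)
  calc star (c i) * (RCLike.ofReal (hD.eigenvalues i)) * c i
      = (RCLike.ofReal (hD.eigenvalues i) : ℂ) * (c i * star (c i)) := by ring
    _ = _ := by rw [this]; rfl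


lemma count_neg {D A B : Matrix (Fin n) (Fin n) ℂ} (hD : D.IsHermitian)
    (hA : A.PosSemidef) (hB : B.PosSemidef) (hBr : B.rank ≤ r) (hDAB : D = A - B) :
    Fintype.card {i // hD.eigenvalues i < 0} ≤ r := by
  by_contra hcard
  push_neg at hcard
  set U : Matrix (Fin n) (Fin n) ℂ := (hD.eigenvectorUnitary : Matrix (Fin n) (Fin n) ℂ) with hU
  set V : Matrix (Fin n) {i // hD.eigenvalues i < 0} ℂ := U.submatrix id (Subtype.val) with hV
  have hnotinj : ¬ Function.Injective ((B * V).mulVecLin) := by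
    intro hinj
    have h1 : Fintype.card {i // hD.eigenvalues i < 0} = (B * V).rank := by
      rw [Matrix.rank, LinearMap.finrank_range_of_inj hinj]
      simp
    have h2 : (B * V).rank ≤ B.rank := Matrix.rank_mul_le_left B V
    exact absurd (h1 ▸ le_trans h2 hBr) (not_le.2 hcard)
  rw [injective_iff_map_eq_zero] at hnotinj
  push_neg at hnotinj
  obtain ⟨c, hc0, hcne⟩ := hnotinj
  classical
  set c' : Fin n → ℂ := fun t => if h : hD.eigenvalues t < 0 then c ⟨t, h⟩ else 0 with hc'
  have hVU : U *ᵥ c' = V *ᵥ c := by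
    ext i
    show ∑ t, U i t * c' t = ∑ j, V i j * c j
    have e1 : ∑ t, U i t * c' t
        = ∑ t ∈ Finset.univ.filter (fun t => hD.eigenvalues t < 0), U i t * c' t := by
      refine (Finset.sum_filter_of_ne fun t _ h => ?_).symm
      by_contra hneg
      exact h (by simp [hc', dif_neg hneg])
    have e2 : ∑ t ∈ Finset.univ.filter (fun t => hD.eigenvalues t < 0), U i t * c' t
        = ∑ j : {i // hD.eigenvalues i < 0}, U i (j : Fin n) * c' (j : Fin n) := by
      exact Finset.sum_subtype _ (by simp) _
    rw [e1, e2]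
    refine Finset.sum_congr rfl fun j _ => ?_
    simp [hc', dif_pos j.2, hV]
  have hv0 : B *ᵥ (V *ᵥ c) = 0 := by
    rw [mulVec_mulVec]; exact hc0
  have hvne : V *ᵥ c ≠ 0 := by
    intro h
    rw [← hVU] at h
    have : star U *ᵥ (U *ᵥ c') = 0 := by rw [h, mulVec_zero]
    rw [mulVec_mulVec, Unitary.coe_star_mul_self, one_mulVec] at this
    obtain ⟨j, hj⟩ := Function.ne_iff.mp hcne
    apply hj
    have := congrFun this j.1
    simpa [hc', dif_pos j.2] using this
  -- quadratic form value
  have hquad : dotProduct (star (V *ᵥ c)) (D *ᵥ (V *ᵥ c))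
      = ∑ i, (hD.eigenvalues i : ℂ) * Complex.normSq (c' i) := by
    rw [← hVU]; exact quadForm hD c'
  have hneg : (dotProduct (star (V *ᵥ c)) (D *ᵥ (V *ᵥ c))).re < 0 := by
    rw [hquad]
    have : (∑ i, ((hD.eigenvalues i : ℂ) * Complex.normSq (c' i))).re
        = ∑ i, hD.eigenvalues i * Complex.normSq (c' i) := by
      rw [Complex.re_sum]
      refine Finset.sum_congr rfl fun i _ => ?_
      simp [← Complex.ofReal_mul]
    rw [this]
    obtain ⟨j, hj⟩ := Function.ne_iff.mp hcne
    have hzero : (0:ℝ) = ∑ _i : Fin n, (0:ℝ) := by simp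
    rw [hzero]
    refine Finset.sum_lt_sum (fun i _ => ?_) ⟨j, Finset.mem_univ _, ?_⟩
    · by_cases h : hD.eigenvalues i < 0
      · exact mul_nonpos_of_nonpos_of_nonneg h.le (Complex.normSq_nonneg _)
      · simp [hc', dif_neg h]
    · have hc'j : c' (j : Fin n) = c j := by simp [hc', dif_pos j.2]
      rw [hc'j]
      exact mul_neg_of_neg_of_pos j.2 (Complex.normSq_pos.2 hj)
  have hdd : dotProduct (star (V *ᵥ c)) (D *ᵥ (V *ᵥ c))
      = dotProduct (star (V *ᵥ c)) (A *ᵥ (V *ᵥ c)) := by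
    have h1 : D *ᵥ (V *ᵥ c) = A *ᵥ (V *ᵥ c) := by
      have := congrArg (fun X : Matrix (Fin n) (Fin n) ℂ => X *ᵥ (V *ᵥ c)) hDAB
      rw [Matrix.sub_mulVec, hv0, sub_zero] at this
      exact this
    rw [h1]
  have hneg2 : (dotProduct (star (V *ᵥ c)) (A *ᵥ (V *ᵥ c))).re < 0 := by
    rw [← hdd]; exact hneg
  have hpos := hA.re_dotProduct_nonneg (V *ᵥ c)
  have : RCLike.re (dotProduct (star (V *ᵥ c)) (A *ᵥ (V *ᵥ c)))
      = (dotProduct (star (V *ᵥ c)) (A *ᵥ (V *ᵥ c))).re := rfl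
  rw [this] at hpos
  linarith [hneg2]


lemma frob_sq_trace {p q : Type*} [Fintype p] [Fintype q] (X : Matrix p q ℂ) :
    ∑ i, ∑ j, Complex.normSq (X i j) = (Matrix.trace (X * Xᴴ)).re := by
  have : Matrix.trace (X * Xᴴ) = ∑ i, ∑ j, (Complex.normSq (X i j) : ℂ) := by
    simp only [Matrix.trace, Matrix.diag_apply, Matrix.mul_apply, Matrix.conjTranspose_apply]
    congr 1; ext i; congr 1; ext j
    rw [← Complex.mul_conj]; rfl
  rw [this]
  simp

lemma trace_conj_diag (U : Matrix.unitaryGroup (Fin n) ℂ) (d : Fin n → ℂ) :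
    Matrix.trace ((U : Matrix (Fin n) (Fin n) ℂ) * diagonal d
      * (U : Matrix (Fin n) (Fin n) ℂ)ᴴ) = ∑ i, d i := by
  rw [Matrix.trace_mul_cycle, ← Matrix.star_eq_conjTranspose,
    Unitary.coe_star_mul_self, one_mul, Matrix.trace_diagonal]

lemma frob_conj_diag (U : Matrix.unitaryGroup (Fin n) ℂ) (μ : Fin n → ℝ) :
    frobNorm ((U : Matrix (Fin n) (Fin n) ℂ) * diagonal (fun t => (μ t : ℂ))
      * (U : Matrix (Fin n) (Fin n) ℂ)ᴴ) = Real.sqrt (∑ t, (μ t)^2) := by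
  set Um : Matrix (Fin n) (Fin n) ℂ := (U : Matrix (Fin n) (Fin n) ℂ) with hUm
  set C := Um * diagonal (fun t => (μ t : ℂ)) * Umᴴ with hC
  have hdg : (diagonal (fun t => (μ t : ℂ)))ᴴ = diagonal (fun t => (μ t : ℂ)) := by
    ext i j
    by_cases h : i = j
    · simp [Matrix.conjTranspose_apply, Matrix.diagonal_apply, h, Complex.conj_ofReal]
    · simp only [Matrix.conjTranspose_apply, Matrix.diagonal_apply, h, if_false]
      rw [if_neg (fun hji : j = i => h hji.symm)]
      simp
  have hCH : Cᴴ = C := by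
    rw [hC]
    simp only [Matrix.conjTranspose_mul, Matrix.conjTranspose_conjTranspose, hdg, mul_assoc]
  have h1 : Umᴴ * (Um * (diagonal (fun t => (μ t : ℂ)) * Umᴴ))
      = diagonal (fun t => (μ t : ℂ)) * Umᴴ := by
    rw [← mul_assoc, ← mul_assoc, hUm, ← Matrix.star_eq_conjTranspose,
      Unitary.coe_star_mul_self, one_mul]
  have hCC : C * Cᴴ = Um * diagonal (fun t => ((μ t)^2 : ℂ)) * Umᴴ := by
    rw [hCH, hC]
    have hd2 : diagonal (fun t => ((μ t)^2 : ℂ))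
        = diagonal (fun t => (μ t : ℂ)) * diagonal (fun t => (μ t : ℂ)) := by
      rw [Matrix.diagonal_mul_diagonal]
      have : (fun t => ((μ t)^2 : ℂ)) = fun i => (μ i : ℂ) * (μ i : ℂ) := funext fun t => by ring
      rw [this]
    rw [hd2]
    simp only [mul_assoc, h1]
  unfold frobNorm
  rw [frob_sq_trace, hCC, hUm, trace_conj_diag]
  congr 1
  rw [Complex.re_sum]
  refine Finset.sum_congr rfl fun t _ => ?_
  simp [← Complex.ofReal_pow]


lemma diag_real_ct {n : ℕ} (f : Fin n → ℝ) :
    (diagonal (fun t => ((f t : ℝ) : ℂ)))ᴴ = diagonal (fun t => ((f t : ℝ) : ℂ)) := by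
  ext i j
  by_cases h : i = j
  · simp [Matrix.conjTranspose_apply, Matrix.diagonal_apply, h, Complex.conj_ofReal]
  · simp only [Matrix.conjTranspose_apply, Matrix.diagonal_apply, h, if_false]
    rw [if_neg (fun hji : j = i => h hji.symm)]
    simp


lemma decomp {D A B : Matrix (Fin n) (Fin n) ℂ} (hD : D.IsHermitian) (hA : A.PosSemidef)
    (hB : B.PosSemidef) (hBr : B.rank ≤ r) (hDAB : D = A - B) :
    ∃ (P : Matrix (Fin n) (Fin n) ℂ) (L : Matrix (Fin n) (Fin r) ℂ),
      P.PosSemidef ∧ D = P - L * Lᴴ ∧ frobNorm P ≤ frobNorm D ∧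
      (∑ i, ∑ k, Complex.normSq (L i k)) ≤ n * frobNorm D := by
  classical
  set lam := hD.eigenvalues with hlam
  set U := hD.eigenvectorUnitary with hUdef
  set Um : Matrix (Fin n) (Fin n) ℂ := (U : Matrix (Fin n) (Fin n) ℂ) with hUm
  set μ : Fin n → ℝ := fun t => max (-lam t) 0 with hμ
  set ν : Fin n → ℝ := fun t => max (lam t) 0 with hν
  have hμ0 : ∀ t, 0 ≤ μ t := fun t => le_max_right _ _
  have hν0 : ∀ t, 0 ≤ ν t := fun t => le_max_right _ _
  set P := Um * diagonal (fun t => (ν t : ℂ)) * Umᴴ with hP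
  set N := Um * diagonal (fun t => (μ t : ℂ)) * Umᴴ with hN
  -- D = P - N
  have hPN : D = P - N := by
    have h1 : P - N = Um * (diagonal (fun t => (ν t : ℂ)) - diagonal (fun t => (μ t : ℂ))) * Umᴴ := by
      rw [hP, hN, Matrix.mul_sub, Matrix.sub_mul]
    have h2 : diagonal (fun t => (ν t : ℂ)) - diagonal (fun t => (μ t : ℂ))
        = diagonal (fun t => (lam t : ℂ)) := by
      rw [Matrix.diagonal_sub]
      have hfun : (fun t => ((ν t : ℝ) : ℂ) - ((μ t : ℝ) : ℂ))
          = fun t => ((lam t : ℝ) : ℂ) := by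
        funext t
        show ((ν t : ℝ) : ℂ) - ((μ t : ℝ) : ℂ) = ((lam t : ℝ) : ℂ)
        rw [← Complex.ofReal_sub]
        exact congrArg Complex.ofReal (max_zero_sub_max_neg_zero_eq_self (lam t))
      rw [hfun]
    have h3 : D = Um * diagonal (fun t => (lam t : ℂ)) * Umᴴ := by
      have := hD.spectral_theorem
      rw [← Matrix.star_eq_conjTranspose] at *
      exact this
    rw [h1, h2, ← h3]
  -- Frobenius norms
  have hfrobD : frobNorm D = Real.sqrt (∑ t, (lam t)^2) := by
    have h3 : D = Um * diagonal (fun t => (lam t : ℂ)) * Umᴴ := by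
      have := hD.spectral_theorem
      rw [← Matrix.star_eq_conjTranspose] at *
      exact this
    rw [h3, hUm]
    exact frob_conj_diag U lam
  have hfrobP : frobNorm P ≤ frobNorm D := by
    rw [hP, hUm, frob_conj_diag U ν, hfrobD]
    apply Real.sqrt_le_sqrt
    apply Finset.sum_le_sum
    intro t _
    have h1 : ν t ≤ |lam t| := max_le (le_abs_self _) (abs_nonneg _)
    calc (ν t)^2 ≤ |lam t|^2 := by
          apply sq_le_sq' (by linarith [hν0 t, abs_nonneg (lam t)]) h1
      _ = (lam t)^2 := sq_abs _
  -- P is PSD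
  have hPpsd : P.PosSemidef := by
    rw [hP]
    exact (Matrix.posSemidef_diagonal_iff.mpr fun t =>
      Complex.zero_le_real.mpr (hν0 t)).mul_mul_conjTranspose_same Um
  -- embedding of negative eigenvalue indices into Fin r
  have hcount : Fintype.card {i // lam i < 0} ≤ Fintype.card (Fin r) := by
    simpa using count_neg hD hA hB hBr hDAB
  obtain ⟨emb⟩ := Function.Embedding.nonempty_of_card_le hcount
  set S : Matrix (Fin n) (Fin r) ℂ :=
    Matrix.of (fun t k => if h : lam t < 0 then (if emb ⟨t, h⟩ = k then (1:ℂ) else 0) else 0)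
    with hS
  set W := Um * diagonal (fun t => ((Real.sqrt (μ t) : ℝ) : ℂ)) with hW
  set L := W * S with hL
  have hSS : S * Sᴴ = diagonal (fun t => if lam t < 0 then (1:ℂ) else 0) := by
    ext t t'
    simp only [Matrix.mul_apply, Matrix.conjTranspose_apply, hS, Matrix.of_apply]
    by_cases ht : lam t < 0
    · by_cases ht' : lam t' < 0
      · simp only [dif_pos ht, dif_pos ht']
        have hterm : ∀ k, (if emb ⟨t, ht⟩ = k then (1:ℂ) else 0)
            * star (if emb ⟨t', ht'⟩ = k then (1:ℂ) else 0)
            = if emb ⟨t, ht⟩ = k then (if emb ⟨t', ht'⟩ = k then (1:ℂ) else 0) else 0 := by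
          intro k; split_ifs <;> simp
        rw [Finset.sum_congr rfl fun k _ => hterm k, Finset.sum_ite_eq]
        simp only [Finset.mem_univ, if_true]
        by_cases htt : t = t'
        · subst htt
          simp [Matrix.diagonal_apply_eq, ht]
        · rw [if_neg, Matrix.diagonal_apply_ne _ htt]
          intro hembeq
          exact htt (congrArg Subtype.val (emb.injective hembeq)).symm
      · have htne : t ≠ t' := fun h => ht' (h ▸ ht)
        simp [dif_pos ht, dif_neg ht', Matrix.diagonal_apply_ne _ htne]
    · by_cases htt : t = t'
      · subst htt
        simp [dif_neg ht, Matrix.diagonal_apply_eq, ht]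
      · simp [dif_neg ht, Matrix.diagonal_apply_ne _ htt]
  have hLL : L * Lᴴ = N := by
    have e1 : L * Lᴴ = W * (S * Sᴴ) * Wᴴ := by
      rw [hL, Matrix.conjTranspose_mul, Matrix.mul_assoc, ← Matrix.mul_assoc S Sᴴ Wᴴ, ← Matrix.mul_assoc]
    rw [e1, hSS, hW, Matrix.conjTranspose_mul, diag_real_ct]
    -- now: Um * dg√ * dgInd * (dg√ * Umᴴ) = N
    have hdd : diagonal (fun t => ((Real.sqrt (μ t) : ℝ) : ℂ))
        * (diagonal (fun t => if lam t < 0 then (1:ℂ) else 0)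
          * diagonal (fun t => ((Real.sqrt (μ t) : ℝ) : ℂ)))
        = diagonal (fun t => ((μ t : ℝ) : ℂ)) := by
      rw [Matrix.diagonal_mul_diagonal, Matrix.diagonal_mul_diagonal]
      have hfun : (fun t => ((Real.sqrt (μ t) : ℝ) : ℂ)
          * ((if lam t < 0 then (1:ℂ) else 0) * ((Real.sqrt (μ t) : ℝ) : ℂ)))
          = fun t => ((μ t : ℝ) : ℂ) := by
        funext t
        by_cases h : lam t < 0
        · simp only [if_pos h, one_mul]
          rw [← Complex.ofReal_mul, Real.mul_self_sqrt (hμ0 t)]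
        · have hμt : μ t = 0 := by
            rw [hμ]
            simp only
            exact max_eq_right (neg_nonpos.mpr (not_lt.1 h))
          simp [if_neg h, hμt]
      rw [hfun]
    rw [hN]
    calc Um * diagonal (fun t => ((Real.sqrt (μ t) : ℝ) : ℂ))
          * diagonal (fun t => if lam t < 0 then (1:ℂ) else 0)
          * (diagonal (fun t => ((Real.sqrt (μ t) : ℝ) : ℂ)) * Umᴴ)
        = Um * (diagonal (fun t => ((Real.sqrt (μ t) : ℝ) : ℂ))
          * (diagonal (fun t => if lam t < 0 then (1:ℂ) else 0)
            * diagonal (fun t => ((Real.sqrt (μ t) : ℝ) : ℂ)))) * Umᴴ := by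
          simp only [mul_assoc]
      _ = Um * diagonal (fun t => ((μ t : ℝ) : ℂ)) * Umᴴ := by rw [hdd]
  -- the sum bound
  have hsum : (∑ i, ∑ k, Complex.normSq (L i k)) ≤ n * frobNorm D := by
    rw [frob_sq_trace, hLL, hN, hUm, trace_conj_diag]
    have htr : (∑ i, ((μ i : ℝ) : ℂ)).re = ∑ i, μ i := by
      rw [Complex.re_sum]
      exact Finset.sum_congr rfl fun i _ => by simp
    rw [htr, hfrobD]
    have hbound : ∀ t, μ t ≤ Real.sqrt (∑ i, (lam i)^2) := by
      intro t
      have h1 : (μ t)^2 ≤ (lam t)^2 := by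
        have h2 : μ t ≤ |lam t| := max_le (neg_le_abs _) (abs_nonneg _)
        calc (μ t)^2 ≤ |lam t|^2 := by
              apply sq_le_sq' (by linarith [hμ0 t, abs_nonneg (lam t)]) h2
          _ = (lam t)^2 := sq_abs _
      have h3 : (μ t)^2 ≤ ∑ i, (lam i)^2 :=
        le_trans h1 (Finset.single_le_sum (f := fun i => (lam i)^2)
          (fun i _ => sq_nonneg _) (Finset.mem_univ t))
      calc μ t = Real.sqrt ((μ t)^2) := (Real.sqrt_sq (hμ0 t)).symm
        _ ≤ Real.sqrt (∑ i, (lam i)^2) := Real.sqrt_le_sqrt h3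
    calc ∑ t, μ t ≤ ∑ _t : Fin n, Real.sqrt (∑ i, (lam i)^2) :=
          Finset.sum_le_sum fun t _ => hbound t
      _ = n * Real.sqrt (∑ i, (lam i)^2) := by
          rw [Finset.sum_const, Finset.card_univ, Fintype.card_fin, nsmul_eq_mul]
  exact ⟨P, L, hPpsd, by rw [hPN, hLL], hfrobP, hsum⟩


lemma isClosed_psd : IsClosed {A : Matrix (Fin n) (Fin n) ℂ | A.PosSemidef} := by
  have heq : {A : Matrix (Fin n) (Fin n) ℂ | A.PosSemidef}
      = {A : Matrix (Fin n) (Fin n) ℂ | Aᴴ = A}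
        ∩ ⋂ (x : Fin n → ℂ), {A | 0 ≤ dotProduct (star x) (A *ᵥ x)} := by
    ext A
    simp only [Set.mem_setOf_eq, Set.mem_inter_iff, Set.mem_iInter]
    exact Matrix.posSemidef_iff_dotProduct_mulVec
  rw [heq]
  refine IsClosed.inter (isClosed_eq (continuous_id.matrix_conjTranspose) continuous_id)
    (isClosed_iInter fun x => ?_)
  have hcont : Continuous fun A : Matrix (Fin n) (Fin n) ℂ => dotProduct (star x) (A *ᵥ x) :=
    Continuous.dotProduct continuous_const (continuous_id.matrix_mulVec continuous_const)
  have hset : {A : Matrix (Fin n) (Fin n) ℂ | 0 ≤ dotProduct (star x) (A *ᵥ x)}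
      = {A | 0 ≤ (dotProduct (star x) (A *ᵥ x)).re}
        ∩ {A | (dotProduct (star x) (A *ᵥ x)).im = 0} := by
    ext A
    simp only [Set.mem_setOf_eq, Set.mem_inter_iff, Complex.nonneg_iff]
    exact ⟨fun ⟨h1, h2⟩ => ⟨h1, h2.symm⟩, fun ⟨h1, h2⟩ => ⟨h1, h2.symm⟩⟩
  rw [hset]
  exact (isClosed_le continuous_const (Complex.continuous_re.comp hcont)).inter
    (isClosed_eq (Complex.continuous_im.comp hcont) continuous_const)

lemma frob_continuous : Continuous (frobNorm (n := n)) := by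
  apply Real.continuous_sqrt.comp
  exact continuous_finset_sum _ fun i _ => continuous_finset_sum _ fun j _ =>
    Complex.continuous_normSq.comp (continuous_id.matrix_elem i j)


lemma psd_smul {A : Matrix (Fin n) (Fin n) ℂ} (hA : A.PosSemidef) {c : ℝ} (hc : 0 ≤ c) :
    (c • A).PosSemidef := by
  rw [Matrix.posSemidef_iff_dotProduct_mulVec]
  constructor
  · show (c • A)ᴴ = c • A
    rw [Matrix.conjTranspose_smul, star_trivial, hA.1.eq]
  · intro x
    rw [Matrix.smul_mulVec, dotProduct_smul]
    rw [Complex.real_smul]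
    exact mul_nonneg (Complex.zero_le_real.mpr hc) (hA.dotProduct_mulVec_nonneg x)


lemma stability {m : ℕ} (M : Matrix (Fin n) (Fin n) ℂ →ₗ[ℝ] EuclideanSpace ℝ (Fin m))
    (hM : rComplete M r) :
    ∃ c > (0:ℝ), ∀ A B : Matrix (Fin n) (Fin n) ℂ, A.PosSemidef → B.PosSemidef → B.rank ≤ r →
      c * frobNorm (A - B) ≤ ‖M (A - B)‖ := by
  classical
  set T : Set ((Matrix (Fin n) (Fin n) ℂ) × (Matrix (Fin n) (Fin r) ℂ)) :=
    {q | q.1.PosSemidef ∧ frobNorm (q.1 - q.2 * q.2ᴴ) = 1 ∧ frobNorm q.1 ≤ 1 ∧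
      (∑ i, ∑ k, Complex.normSq (q.2 i k)) ≤ (n:ℝ)} with hT
  -- continuity of the objective
  have hMcont : Continuous M := M.continuous_of_finiteDimensional
  have hgcont : Continuous fun q : (Matrix (Fin n) (Fin n) ℂ) × (Matrix (Fin n) (Fin r) ℂ) =>
      q.1 - q.2 * q.2ᴴ :=
    continuous_fst.sub (continuous_snd.matrix_mul continuous_snd.matrix_conjTranspose)
  have hfcont : Continuous fun q : (Matrix (Fin n) (Fin n) ℂ) × (Matrix (Fin n) (Fin r) ℂ) =>
      ‖M (q.1 - q.2 * q.2ᴴ)‖ := continuous_norm.comp (hMcont.comp hgcont)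
  -- closedness
  have hTclosed : IsClosed T := by
    have h1 : IsClosed {q : (Matrix (Fin n) (Fin n) ℂ) × (Matrix (Fin n) (Fin r) ℂ) |
        q.1.PosSemidef} := isClosed_psd.preimage continuous_fst
    have h2 : IsClosed {q : (Matrix (Fin n) (Fin n) ℂ) × (Matrix (Fin n) (Fin r) ℂ) |
        frobNorm (q.1 - q.2 * q.2ᴴ) = 1} :=
      isClosed_eq (frob_continuous.comp hgcont) continuous_const
    have h3 : IsClosed {q : (Matrix (Fin n) (Fin n) ℂ) × (Matrix (Fin n) (Fin r) ℂ) |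
        frobNorm q.1 ≤ 1} :=
      isClosed_le (frob_continuous.comp continuous_fst) continuous_const
    have h4 : IsClosed {q : (Matrix (Fin n) (Fin n) ℂ) × (Matrix (Fin n) (Fin r) ℂ) |
        (∑ i, ∑ k, Complex.normSq (q.2 i k)) ≤ (n:ℝ)} := by
      refine isClosed_le ?_ continuous_const
      exact continuous_finset_sum _ fun i _ => continuous_finset_sum _ fun k _ =>
        Complex.continuous_normSq.comp ((continuous_snd).matrix_elem i k)
    exact h1.inter (h2.inter (h3.inter h4))
  -- compactness
  have hTcompact : IsCompact T := by
    have hK1 : IsCompact ((Set.univ.pi fun _ : Fin n => Set.univ.pi fun _ : Fin n =>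
        Metric.closedBall (0:ℂ) 1) : Set (Matrix (Fin n) (Fin n) ℂ)) :=
      isCompact_univ_pi fun _ => isCompact_univ_pi fun _ => isCompact_closedBall _ _
    have hK2 : IsCompact ((Set.univ.pi fun _ : Fin n => Set.univ.pi fun _ : Fin r =>
        Metric.closedBall (0:ℂ) (Real.sqrt n)) : Set (Matrix (Fin n) (Fin r) ℂ)) :=
      isCompact_univ_pi fun _ => isCompact_univ_pi fun _ => isCompact_closedBall _ _
    refine IsCompact.of_isClosed_subset (hK1.prod hK2) hTclosed ?_
    rintro ⟨A, L⟩ ⟨_, _, hA1, hL⟩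
    constructor
    · intro i _
      intro j _
      rw [Metric.mem_closedBall, dist_zero_right]
      have hsum : ∑ i', ∑ j', Complex.normSq (A i' j') ≤ 1 := by
        have h0 : 0 ≤ ∑ i', ∑ j', Complex.normSq (A i' j') :=
          Finset.sum_nonneg fun _ _ => Finset.sum_nonneg fun _ _ => Complex.normSq_nonneg _
        have := hA1
        unfold frobNorm at this
        nlinarith [Real.sq_sqrt h0, Real.sqrt_nonneg (∑ i', ∑ j', Complex.normSq (A i' j'))]
      have hone : Complex.normSq (A i j) ≤ 1 := by
        calc Complex.normSq (A i j)
            ≤ ∑ j', Complex.normSq (A i j') :=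
              Finset.single_le_sum (f := fun j' => Complex.normSq (A i j'))
                (fun _ _ => Complex.normSq_nonneg _) (Finset.mem_univ j)
          _ ≤ ∑ i', ∑ j', Complex.normSq (A i' j') :=
              Finset.single_le_sum (f := fun i' => ∑ j', Complex.normSq (A i' j'))
                (fun _ _ => Finset.sum_nonneg fun _ _ => Complex.normSq_nonneg _)
                (Finset.mem_univ i)
          _ ≤ 1 := hsum
      have : ‖A i j‖^2 = Complex.normSq (A i j) := by
        rw [Complex.sq_norm]
      nlinarith [norm_nonneg (A i j)]
    · intro i _
      intro k _
      rw [Metric.mem_closedBall, dist_zero_right]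
      have hone : Complex.normSq (L i k) ≤ (n:ℝ) := by
        calc Complex.normSq (L i k)
            ≤ ∑ k', Complex.normSq (L i k') :=
              Finset.single_le_sum (f := fun k' => Complex.normSq (L i k'))
                (fun _ _ => Complex.normSq_nonneg _) (Finset.mem_univ k)
          _ ≤ ∑ i', ∑ k', Complex.normSq (L i' k') :=
              Finset.single_le_sum (f := fun i' => ∑ k', Complex.normSq (L i' k'))
                (fun _ _ => Finset.sum_nonneg fun _ _ => Complex.normSq_nonneg _)
                (Finset.mem_univ i)
          _ ≤ (n:ℝ) := hL
      have h2 : ‖L i k‖^2 = Complex.normSq (L i k) := by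
        rw [Complex.sq_norm]
      have h3 : Real.sqrt n * Real.sqrt n = (n:ℝ) := Real.mul_self_sqrt (Nat.cast_nonneg n)
      nlinarith [norm_nonneg (L i k), Real.sqrt_nonneg (n:ℝ)]
  -- key construction: normalized point of T from a pair (A, B)
  have key : ∀ A B : Matrix (Fin n) (Fin n) ℂ, A.PosSemidef → B.PosSemidef → B.rank ≤ r →
      A - B ≠ 0 → ∃ q ∈ T,
        frobNorm (A - B) * ‖M (q.1 - q.2 * q.2ᴴ)‖ = ‖M (A - B)‖ := by
    intro A B hA hB hBr hD0
    have hDh : (A - B).IsHermitian := hA.1.sub hB.1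
    obtain ⟨P, L, hPpsd, hdec, hfP, hsL⟩ := decomp (r := r) hDh hA hB hBr rfl
    set s := frobNorm (A - B) with hs
    have hspos : 0 < s := frob_pos hD0
    set a := (Real.sqrt s)⁻¹ with ha
    have ha2 : a^2 = s⁻¹ := by
      rw [ha, ← Real.sqrt_inv, Real.sq_sqrt (inv_nonneg.mpr hspos.le)]
    have hLL : (a • L) * (a • L)ᴴ = s⁻¹ • (L * Lᴴ) := by
      rw [Matrix.conjTranspose_smul, star_trivial, Matrix.smul_mul, Matrix.mul_smul, smul_smul]
      rw [← sq, ha2]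
    have hq1 : s⁻¹ • P - (a • L) * (a • L)ᴴ = s⁻¹ • (A - B) := by
      rw [hLL, ← smul_sub, ← hdec]
    refine ⟨(s⁻¹ • P, a • L), ⟨psd_smul hPpsd (inv_nonneg.mpr hspos.le), ?_, ?_, ?_⟩, ?_⟩
    · show frobNorm (s⁻¹ • P - (a • L) * (a • L)ᴴ) = 1
      rw [hq1, frob_smul, abs_of_nonneg (inv_nonneg.mpr hspos.le), ← hs,
        inv_mul_cancel₀ hspos.ne']
    · show frobNorm (s⁻¹ • P) ≤ 1
      rw [frob_smul, abs_of_nonneg (inv_nonneg.mpr hspos.le)]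
      calc s⁻¹ * frobNorm P ≤ s⁻¹ * s :=
            mul_le_mul_of_nonneg_left hfP (inv_nonneg.mpr hspos.le)
        _ = 1 := inv_mul_cancel₀ hspos.ne'
    · show (∑ i, ∑ k, Complex.normSq ((a • L) i k)) ≤ (n:ℝ)
      have hentry : ∀ i k, Complex.normSq ((a • L) i k) = a^2 * Complex.normSq (L i k) := by
        intro i k
        rw [Matrix.smul_apply, Complex.real_smul, Complex.normSq_mul, Complex.normSq_ofReal]
        ring
      simp_rw [hentry, ← Finset.mul_sum]
      rw [ha2]
      calc s⁻¹ * (∑ i, ∑ k, Complex.normSq (L i k)) ≤ s⁻¹ * (n * s) :=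
            mul_le_mul_of_nonneg_left hsL (inv_nonneg.mpr hspos.le)
        _ = (n:ℝ) := by field_simp
    · show s * ‖M (s⁻¹ • P - (a • L) * (a • L)ᴴ)‖ = ‖M (A - B)‖
      rw [hq1, _root_.map_smul, norm_smul, Real.norm_eq_abs, abs_of_nonneg (inv_nonneg.mpr hspos.le)]
      field_simp
  -- now produce the constant
  rcases T.eq_empty_or_nonempty with hTe | hTne
  · refine ⟨1, one_pos, fun A B hA hB hBr => ?_⟩
    by_cases hD0 : A - B = 0
    · rw [hD0]
      simp only [one_mul]
      have : frobNorm (0 : Matrix (Fin n) (Fin n) ℂ) = 0 := by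
        unfold frobNorm; simp
      rw [this]
      exact norm_nonneg _
    · obtain ⟨q, hqT, -⟩ := key A B hA hB hBr hD0
      rw [hTe] at hqT
      exact absurd hqT (Set.notMem_empty q)
  · obtain ⟨q0, hq0T, hq0min⟩ := hTcompact.exists_isMinOn hTne hfcont.continuousOn
    set c := ‖M (q0.1 - q0.2 * q0.2ᴴ)‖ with hc
    have hcpos : 0 < c := by
      rw [hc, norm_pos_iff]
      intro hMzero
      have hD0 : q0.1 - q0.2 * q0.2ᴴ ≠ 0 := by
        intro h0
        have := hq0T.2.1
        rw [h0] at this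
        unfold frobNorm at this
        simp at this
      have hne : q0.2 * q0.2ᴴ ≠ q0.1 := fun h => hD0 (by rw [h]; simp)
      have hrank : (q0.2 * q0.2ᴴ).rank ≤ r := by
        calc (q0.2 * q0.2ᴴ).rank ≤ q0.2.rank := Matrix.rank_mul_le_left _ _
          _ ≤ Fintype.card (Fin r) := Matrix.rank_le_card_width q0.2
          _ = r := Fintype.card_fin r
      have hMeq : M (q0.2 * q0.2ᴴ) = M q0.1 := by
        have := sub_eq_zero.mp (by rw [← map_sub]; exact hMzero : M q0.1 - M (q0.2 * q0.2ᴴ) = 0)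
        exact this.symm
      exact hM (q0.2 * q0.2ᴴ) q0.1 (Matrix.posSemidef_self_mul_conjTranspose _) hrank
        hq0T.1 hne hMeq
    refine ⟨c, hcpos, fun A B hA hB hBr => ?_⟩
    by_cases hD0 : A - B = 0
    · rw [hD0]
      have : frobNorm (0 : Matrix (Fin n) (Fin n) ℂ) = 0 := by
        unfold frobNorm; simp
      rw [this, mul_zero]
      exact norm_nonneg _
    · obtain ⟨q, hqT, hqeq⟩ := key A B hA hB hBr hD0
      have hcle : c ≤ ‖M (q.1 - q.2 * q.2ᴴ)‖ := hq0min hqT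
      calc c * frobNorm (A - B) = frobNorm (A - B) * c := mul_comm _ _
        _ ≤ frobNorm (A - B) * ‖M (q.1 - q.2 * q.2ᴴ)‖ :=
            mul_le_mul_of_nonneg_left hcle (frob_nonneg _)
        _ = ‖M (A - B)‖ := hqeq


/-- if `M` is `r`-complete then there is `C > 0` such that for all `ε > 0`,
all `X_r ∈ S_r^n` and all Hermitian `E` with `‖M(E)‖₂ ≤ ε`, every minimizer `Y` of `tr(Y)`
over `{Y ⪰ 0 : ‖M(Y) − b‖₂ ≤ ε}` with `b = M(X_r + E)` satisfies `‖Y − X_r‖₂ ≤ C·ε`. -/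
theorem stmt10 {n m r : ℕ}
    (M : Matrix (Fin n) (Fin n) ℂ →ₗ[ℝ] EuclideanSpace ℝ (Fin m))
    (hM : rComplete M r) :
    ∃ C > (0 : ℝ), ∀ ε > (0 : ℝ),
      ∀ Xr : Matrix (Fin n) (Fin n) ℂ, Xr.PosSemidef → Xr.rank ≤ r →
      ∀ E : Matrix (Fin n) (Fin n) ℂ, E.IsHermitian → ‖M E‖ ≤ ε →
      ∀ Y : Matrix (Fin n) (Fin n) ℂ, Y.PosSemidef → ‖M Y - M (Xr + E)‖ ≤ ε →
        (∀ Z : Matrix (Fin n) (Fin n) ℂ, Z.PosSemidef → ‖M Z - M (Xr + E)‖ ≤ ε →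
          (Y.trace).re ≤ (Z.trace).re) →
        frobNorm (Y - Xr) ≤ C * ε := by
  obtain ⟨c, hcpos, hstab⟩ := stability M hM
  refine ⟨2 / c, by positivity, ?_⟩
  intro ε hε Xr hXr hXrr E hE hME Y hY hYfeas _hmin
  have h1 : c * frobNorm (Y - Xr) ≤ ‖M (Y - Xr)‖ := hstab Y Xr hY hXr hXrr
  have h2 : ‖M (Y - Xr)‖ ≤ 2 * ε := by
    have e1 : M (Y - Xr) = (M Y - M (Xr + E)) + M E := by
      rw [map_sub, map_add]
      abel
    rw [e1]
    calc ‖(M Y - M (Xr + E)) + M E‖ ≤ ‖M Y - M (Xr + E)‖ + ‖M E‖ := norm_add_le _ _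
      _ ≤ ε + ε := add_le_add hYfeas hME
      _ = 2 * ε := by ring
  have h3 : frobNorm (Y - Xr) ≤ 2 * ε / c := by
    rw [le_div_iff₀ hcpos]
    calc frobNorm (Y - Xr) * c = c * frobNorm (Y - Xr) := mul_comm _ _
      _ ≤ 2 * ε := le_trans h1 h2
  calc frobNorm (Y - Xr) ≤ 2 * ε / c := h3
    _ = 2 / c * ε := by ring
end
end

section
/- Let M : H(n) → ℝ^m be a 1-complete measurement. Then there exists a constant C > 0 depending only on M such that the following holds. Let x ∈ ℂⁿ be nonzero, let E ∈ H(n), let ε ≥ ‖M(E)‖₂ with ε > 0, and let Y be a positive semidefinite Hermitian matrix minimizing tr(Y) subject to Y ⪰ 0 and ‖M(Y) − M(xx* + E)‖₂ ≤ ε. Set x̂ := √(λ₁(Y))·x′, where x′ is a unit-norm eigenvector of Y for its largest eigenvalue λ₁(Y). Then ‖xx* − x̂x̂*‖₂ ≤ 2Cε, and there exists φ ∈ [0,2π) such that ‖x − e^{iφ}x̂‖₂ ≤ (2√2·C/‖x‖₂)·ε. -/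
open Matrix
open scoped ComplexOrder

noncomputable section

/-- The Euclidean norm `‖x‖₂` of a vector in `ℂⁿ`. -/
def vecNorm {n : ℕ} (x : Fin n → ℂ) : ℝ :=
  Real.sqrt (∑ i, Complex.normSq (x i))

namespace Stmt11Aux
variable {n : ℕ}

/-! ### Basic norm lemmas -/

def toE {n : ℕ} (Z : Matrix (Fin n) (Fin n) ℂ) : EuclideanSpace ℂ (Fin n × Fin n) :=
  (WithLp.equiv 2 _).symm (fun p : Fin n × Fin n => Z p.1 p.2)

def toV {n : ℕ} (x : Fin n → ℂ) : EuclideanSpace ℂ (Fin n) :=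
  (WithLp.equiv 2 _).symm x

lemma normSq_eq (z : ℂ) : Complex.normSq z = ‖z‖^2 := by
  exact Complex.normSq_eq_norm_sq z

lemma frobNorm_eq (Z : Matrix (Fin n) (Fin n) ℂ) : frobNorm Z = ‖toE Z‖ := by
  rw [EuclideanSpace.norm_eq, frobNorm]
  congr 1
  rw [Fintype.sum_prod_type]
  exact Finset.sum_congr rfl fun i _ => Finset.sum_congr rfl fun j _ => normSq_eq _

lemma vecNorm_eq (x : Fin n → ℂ) : vecNorm x = ‖toV x‖ := by
  rw [EuclideanSpace.norm_eq, vecNorm]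
  exact congrArg _ (Finset.sum_congr rfl fun p _ => normSq_eq _)

lemma toE_sub (A B : Matrix (Fin n) (Fin n) ℂ) : toE (A - B) = toE A - toE B := rfl

lemma frobNorm_nonneg (Z : Matrix (Fin n) (Fin n) ℂ) : 0 ≤ frobNorm Z := Real.sqrt_nonneg _
lemma vecNorm_nonneg (x : Fin n → ℂ) : 0 ≤ vecNorm x := Real.sqrt_nonneg _

lemma frobNorm_triangle (A B C : Matrix (Fin n) (Fin n) ℂ) :
    frobNorm (A - C) ≤ frobNorm (A - B) + frobNorm (B - C) := by
  rw [frobNorm_eq, frobNorm_eq, frobNorm_eq, toE_sub, toE_sub, toE_sub]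
  exact norm_sub_le_norm_sub_add_norm_sub _ _ _

lemma frobNorm_eq_zero {Z : Matrix (Fin n) (Fin n) ℂ} (h : frobNorm Z = 0) : Z = 0 := by
  rw [frobNorm_eq] at h
  have h2 := norm_eq_zero.mp h
  ext i j
  have : toE Z (i, j) = 0 := by rw [h2]; rfl
  exact this

lemma cauchySchwarz (v w : Fin n → ℂ) :
    ‖star v ⬝ᵥ w‖ ≤ vecNorm v * vecNorm w := by
  rw [vecNorm_eq, vecNorm_eq]
  have h : (inner ℂ (toV v) (toV w) : ℂ) = star v ⬝ᵥ w := by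
    simp [toV, dotProduct, PiLp.inner_apply, mul_comm]
  calc ‖star v ⬝ᵥ w‖ = ‖(inner ℂ (toV v) (toV w) : ℂ)‖ := by rw [h]
    _ ≤ ‖toV v‖ * ‖toV w‖ := norm_inner_le_norm _ _

lemma vecNorm_sq (x : Fin n → ℂ) : (vecNorm x)^2 = ∑ i, Complex.normSq (x i) :=
  Real.sq_sqrt (Finset.sum_nonneg fun _ _ => Complex.normSq_nonneg _)

lemma frobNorm_sq (Z : Matrix (Fin n) (Fin n) ℂ) :
    (frobNorm Z)^2 = ∑ i, ∑ j, Complex.normSq (Z i j) :=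
  Real.sq_sqrt (Finset.sum_nonneg fun _ _ => Finset.sum_nonneg fun _ _ => Complex.normSq_nonneg _)

lemma dot_self (x : Fin n → ℂ) : star x ⬝ᵥ x = (((vecNorm x)^2 : ℝ) : ℂ) := by
  rw [vecNorm_sq, dotProduct]
  push_cast
  exact Finset.sum_congr rfl fun i _ => by
    simp [Complex.normSq_eq_conj_mul_self]

/-! ### vecMulVec lemmas -/

lemma mulVec_vecMulVec' (v w : Fin n → ℂ) :
    (vecMulVec v (star v)) *ᵥ w = (star v ⬝ᵥ w) • v := by
  ext i
  simp [vecMulVec_apply, mulVec, dotProduct, Finset.mul_sum, mul_comm, mul_left_comm]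

lemma dot_star_comm (v w : Fin n → ℂ) : star w ⬝ᵥ v = starRingEnd ℂ (star v ⬝ᵥ w) := by
  simp [dotProduct, map_sum, mul_comm]

lemma qf_vecMulVec (v w : Fin n → ℂ) :
    star w ⬝ᵥ ((vecMulVec v (star v)) *ᵥ w) = (Complex.normSq (star v ⬝ᵥ w) : ℂ) := by
  rw [mulVec_vecMulVec', dotProduct_smul, dot_star_comm, smul_eq_mul, mul_comm,
    Complex.mul_conj]
  rw [Complex.normSq_conj]

lemma isHermitian_vecMulVec (v : Fin n → ℂ) : (vecMulVec v (star v)).IsHermitian := by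
  ext i j
  simp [conjTranspose_apply, vecMulVec_apply, mul_comm]

lemma posSemidef_vecMulVec (v : Fin n → ℂ) : (vecMulVec v (star v)).PosSemidef := by
  refine .of_dotProduct_mulVec_nonneg (isHermitian_vecMulVec v) fun w => ?_
  rw [qf_vecMulVec]
  rw [Complex.zero_le_real]
  exact Complex.normSq_nonneg _

lemma rank_vecMulVec_le (v w : Fin n → ℂ) : (vecMulVec v w).rank ≤ 1 := by
  rw [vecMulVec_eq (Fin 1)]
  exact le_trans (rank_mul_le_left _ _) ((rank_le_card_width _).trans (by simp))

lemma vecNorm_mulVec_le (Z : Matrix (Fin n) (Fin n) ℂ) (w : Fin n → ℂ) :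
    vecNorm (Z *ᵥ w) ≤ frobNorm Z * vecNorm w := by
  have key : (vecNorm (Z *ᵥ w))^2 ≤ (frobNorm Z)^2 * (vecNorm w)^2 := by
    rw [vecNorm_sq, frobNorm_sq, Finset.sum_mul]
    refine Finset.sum_le_sum fun i _ => ?_
    have h1 : (Z *ᵥ w) i = star (star (Z i)) ⬝ᵥ w := by
      simp [mulVec, dotProduct]
    have h2 : ‖(Z *ᵥ w) i‖ ≤ vecNorm (star (Z i)) * vecNorm w := h1 ▸ cauchySchwarz _ _
    have h3 : vecNorm (star (Z i)) = vecNorm (fun j => Z i j) := by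
      unfold vecNorm
      congr 1
      exact Finset.sum_congr rfl fun j _ => by simp [Complex.normSq_conj]
    rw [h3] at h2
    have h4 : Complex.normSq ((Z *ᵥ w) i) = ‖(Z *ᵥ w) i‖^2 := normSq_eq _
    have h5 : (vecNorm (fun j => Z i j))^2 = ∑ j, Complex.normSq (Z i j) := vecNorm_sq _
    calc Complex.normSq ((Z *ᵥ w) i) = ‖(Z *ᵥ w) i‖^2 := h4
      _ ≤ (vecNorm (fun j => Z i j) * vecNorm w)^2 := by
          have := norm_nonneg ((Z *ᵥ w) i)
          nlinarith [vecNorm_nonneg (fun j => Z i j), vecNorm_nonneg w]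
      _ = (∑ j, Complex.normSq (Z i j)) * (vecNorm w)^2 := by rw [mul_pow, h5]
  nlinarith [vecNorm_nonneg (Z *ᵥ w), mul_nonneg (frobNorm_nonneg Z) (vecNorm_nonneg w)]

/-! ### Spectral toolkit -/

section herm
variable {Z : Matrix (Fin n) (Fin n) ℂ} (hZ : Z.IsHermitian)

local notation "U" => (Matrix.IsHermitian.eigenvectorUnitary hZ : Matrix (Fin n) (Fin n) ℂ)

lemma U_unitary : (star U) * U = 1 ∧ U * (star U) = 1 :=
  Unitary.mem_iff.mp (Matrix.IsHermitian.eigenvectorUnitary hZ).2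

lemma dot_U (y t : Fin n → ℂ) :
    star (U *ᵥ y) ⬝ᵥ (U *ᵥ t) = star y ⬝ᵥ t := by
  rw [star_mulVec, dotProduct_mulVec, vecMul_vecMul, ← star_eq_conjTranspose,
    (U_unitary hZ).1, vecMul_one]

lemma qf_expansion (y : Fin n → ℂ) :
    star (U *ᵥ y) ⬝ᵥ (Z *ᵥ (U *ᵥ y)) = ∑ i, (hZ.eigenvalues i : ℂ) * Complex.normSq (y i) := by
  have hZU : Z * U = U * diagonal (RCLike.ofReal ∘ hZ.eigenvalues) := by
    have h2 : (U * diagonal (RCLike.ofReal ∘ hZ.eigenvalues) * star U) * U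
        = U * diagonal (RCLike.ofReal ∘ hZ.eigenvalues) := by
      rw [mul_assoc, (U_unitary hZ).1, mul_one]
    have hs := hZ.spectral_theorem
    simp only [Unitary.conjStarAlgAut_apply, Unitary.coe_star] at hs
    rw [← h2, ← hs]
  have key := congrArg (fun A : Matrix (Fin n) (Fin n) ℂ => A *ᵥ y) hZU
  simp only [← mulVec_mulVec] at key
  rw [key, dot_U hZ]
  simp [dotProduct, mulVec_diagonal, Complex.normSq_eq_conj_mul_self]
  ring_nf
  exact Finset.sum_congr rfl fun i _ => by ring

lemma param (w : Fin n → ℂ) : w = U *ᵥ ((star U) *ᵥ w) := by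
  rw [mulVec_mulVec, (U_unitary hZ).2, one_mulVec]

lemma dot_col (i : Fin n) (y : Fin n → ℂ) :
    star (U *ᵥ Pi.single i 1) ⬝ᵥ (U *ᵥ y) = y i := by
  rw [dot_U hZ]
  simp [dotProduct, Pi.single_apply]

lemma vecNorm_col (i : Fin n) : vecNorm (U *ᵥ Pi.single i 1) = 1 := by
  have h1 : (((vecNorm (U *ᵥ Pi.single i 1))^2 : ℝ) : ℂ) = 1 := by
    rw [← dot_self, dot_col hZ i]
    simp
  have h2 : (vecNorm (U *ᵥ Pi.single i 1))^2 = (1:ℝ) := by exact_mod_cast h1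
  nlinarith [vecNorm_nonneg (U *ᵥ Pi.single i 1)]

lemma eig_le_frob (i : Fin n) : hZ.eigenvalues i ≤ frobNorm Z := by
  set v := U *ᵥ Pi.single i 1 with hv
  have h1 : star v ⬝ᵥ (Z *ᵥ v) = ((hZ.eigenvalues i : ℝ) : ℂ) := by
    rw [hv, qf_expansion hZ]
    rw [Fintype.sum_eq_single i (fun j hj => by simp [Pi.single_apply, hj])]
    simp
  have h2 : ‖star v ⬝ᵥ (Z *ᵥ v)‖ ≤ vecNorm v * vecNorm (Z *ᵥ v) := cauchySchwarz _ _
  rw [h1] at h2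
  have h3 : vecNorm (Z *ᵥ v) ≤ frobNorm Z * vecNorm v := vecNorm_mulVec_le _ _
  have h4 : vecNorm v = 1 := vecNorm_col hZ i
  rw [h4] at h2 h3
  simp at h2 h3
  calc hZ.eigenvalues i ≤ |hZ.eigenvalues i| := le_abs_self _
    _ ≤ frobNorm Z := by rw [← Real.norm_eq_abs]; exact h2.trans h3

end herm

/-! ### misc helpers -/

lemma sum_two {α : Type*} [AddCommMonoid α] {i j : Fin n} (hij : i ≠ j) (f : Fin n → α)
    (hf : ∀ k, k ≠ i → k ≠ j → f k = 0) : ∑ k, f k = f i + f j := by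
  rw [← Finset.sum_subset (Finset.subset_univ {i, j})
    (fun k _ hk => by
      simp only [Finset.mem_insert, Finset.mem_singleton] at hk
      push_neg at hk
      exact hf k hk.1 hk.2)]
  rw [Finset.sum_insert (by simp [hij]), Finset.sum_singleton]

lemma isHermitian_real_smul {A : Matrix (Fin n) (Fin n) ℂ} (hA : A.IsHermitian) (r : ℝ) :
    ((r:ℂ) • A).IsHermitian := by
  rw [Matrix.IsHermitian, conjTranspose_smul, Complex.star_def, Complex.conj_ofReal, hA.eq]

lemma real_smul_matrix (r : ℝ) (Z : Matrix (Fin n) (Fin n) ℂ) : ((r:ℂ) • Z) = r • Z := by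
  ext i j
  simp [Complex.real_smul]

lemma posSemidef_real_smul {Z : Matrix (Fin n) (Fin n) ℂ} (hZ : Z.PosSemidef) {r : ℝ}
    (hr : 0 ≤ r) : ((r:ℂ) • Z).PosSemidef := by
  refine .of_dotProduct_mulVec_nonneg (isHermitian_real_smul hZ.1 r) fun w => ?_
  rw [smul_mulVec, dotProduct_smul, smul_eq_mul]
  exact mul_nonneg (by rw [Complex.zero_le_real]; exact hr) (hZ.dotProduct_mulVec_nonneg w)

/-! ### The core structural lemma -/

lemma exists_unit_cover {x : Fin n → ℂ} {Y : Matrix (Fin n) (Fin n) ℂ} (hY : Y.PosSemidef)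
    (hD : vecMulVec x (star x) - Y ≠ 0) :
    ∃ v : Fin n → ℂ, vecNorm v = 1 ∧
      (((frobNorm (vecMulVec x (star x) - Y) : ℝ) : ℂ) • vecMulVec v (star v)
        - (vecMulVec x (star x) - Y)).PosSemidef := by
  set A := vecMulVec x (star x) with hA
  set D := A - Y with hDdef
  have hDh : D.IsHermitian := (isHermitian_vecMulVec x).sub hY.1
  set t := frobNorm D with ht
  have ht0 : 0 ≤ t := frobNorm_nonneg D
  -- no two positive eigenvalues
  have hneg : ∀ i j : Fin n, i ≠ j → 0 < hDh.eigenvalues i → hDh.eigenvalues j ≤ 0 := by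
    intro i j hij hi
    by_contra hj
    push_neg at hj
    set U := (Matrix.IsHermitian.eigenvectorUnitary hDh : Matrix (Fin n) (Fin n) ℂ) with hU
    set G := star x ᵥ* U with hG
    set c : ℂ × ℂ := if G i = 0 ∧ G j = 0 then (1, 0) else (G j, -G i) with hc
    set y₀ : Fin n → ℂ := fun k => if k = i then c.1 else if k = j then c.2 else 0 with hy₀
    have hy₀i : y₀ i = c.1 := by simp [hy₀]
    have hy₀j : y₀ j = c.2 := by simp [hy₀, hij.symm]
    have hdotx : star x ⬝ᵥ (U *ᵥ y₀) = 0 := by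
      rw [dotProduct_mulVec, ← hG]
      show (∑ k, G k * y₀ k) = 0
      rw [sum_two hij (fun k => G k * y₀ k) (fun k hki hkj => by simp [hy₀, hki, hkj])]
      rw [hy₀i, hy₀j, hc]
      by_cases h : G i = 0 ∧ G j = 0
      · simp [h.1, h.2]
      · simp only [if_neg h]
        ring
    have hc0 : 0 < Complex.normSq c.1 + Complex.normSq c.2 := by
      by_cases h : G i = 0 ∧ G j = 0
      · simp [hc, h]
      · rw [hc, if_neg h]
        rcases not_and_or.mp h with h1 | h1
        · have : Complex.normSq (G i) > 0 := Complex.normSq_pos.mpr h1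
          simp only []
          nlinarith [Complex.normSq_nonneg (G j), Complex.normSq_neg (G i)]
        · have : Complex.normSq (G j) > 0 := Complex.normSq_pos.mpr h1
          simp only []
          nlinarith [Complex.normSq_nonneg (-G i)]
    -- value of quadratic form of D
    have hqf : star (U *ᵥ y₀) ⬝ᵥ (D *ᵥ (U *ᵥ y₀))
        = ((hDh.eigenvalues i * Complex.normSq c.1
            + hDh.eigenvalues j * Complex.normSq c.2 : ℝ) : ℂ) := by
      rw [qf_expansion hDh]
      rw [sum_two hij (fun k => (hDh.eigenvalues k : ℂ) * Complex.normSq (y₀ k))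
        (fun k hki hkj => by simp [hy₀, hki, hkj])]
      rw [hy₀i, hy₀j]
      push_cast
      ring
    have hqfA : star (U *ᵥ y₀) ⬝ᵥ (A *ᵥ (U *ᵥ y₀)) = 0 := by
      rw [hA, qf_vecMulVec, hdotx]
      simp
    have hqfD : star (U *ᵥ y₀) ⬝ᵥ (D *ᵥ (U *ᵥ y₀))
        = - (star (U *ᵥ y₀) ⬝ᵥ (Y *ᵥ (U *ᵥ y₀))) := by
      rw [hDdef, sub_mulVec, dotProduct_sub, hqfA, zero_sub]
    have hY0 := hY.dotProduct_mulVec_nonneg (U *ᵥ y₀)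
    have hle : ((hDh.eigenvalues i * Complex.normSq c.1
            + hDh.eigenvalues j * Complex.normSq c.2 : ℝ) : ℂ) ≤ 0 := by
      rw [← hqf, hqfD]
      exact neg_nonpos.mpr hY0
    have hle' : hDh.eigenvalues i * Complex.normSq c.1
            + hDh.eigenvalues j * Complex.normSq c.2 ≤ 0 := by exact_mod_cast hle
    rcases lt_or_ge 0 (Complex.normSq c.1) with h1 | h1
    · nlinarith [mul_pos hi h1, mul_nonneg hj.le (Complex.normSq_nonneg c.2)]
    · have h2 : 0 < Complex.normSq c.2 := by nlinarith [Complex.normSq_nonneg c.1]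
      nlinarith [mul_pos hj h2, mul_nonneg hi.le (Complex.normSq_nonneg c.1)]
  -- choose the index i₀
  have hex : ∃ i₀ : Fin n, hDh.eigenvalues i₀ ≤ t ∧ ∀ k, k ≠ i₀ → hDh.eigenvalues k ≤ 0 := by
    by_cases hpos : ∃ i, 0 < hDh.eigenvalues i
    · obtain ⟨i₀, hi₀⟩ := hpos
      exact ⟨i₀, eig_le_frob hDh i₀, fun k hk => hneg i₀ k (fun h => hk h.symm) hi₀⟩
    · push_neg at hpos
      have hn : 0 < n := by
        rcases Nat.eq_zero_or_pos n with h | h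
        · exfalso
          apply hD
          subst h
          ext i j
          exact Fin.elim0 i
        · exact h
      exact ⟨⟨0, hn⟩, le_trans (hpos _) ht0, fun k _ => hpos k⟩
  obtain ⟨i₀, hi₀t, hi₀⟩ := hex
  set U := (Matrix.IsHermitian.eigenvectorUnitary hDh : Matrix (Fin n) (Fin n) ℂ) with hU
  refine ⟨U *ᵥ Pi.single i₀ 1, vecNorm_col hDh i₀, ?_⟩
  refine .of_dotProduct_mulVec_nonneg ((isHermitian_real_smul (isHermitian_vecMulVec _) t).sub hDh) fun w => ?_
  obtain ⟨y, rfl⟩ : ∃ y, w = U *ᵥ y := ⟨star U *ᵥ w, param hDh w⟩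
  rw [sub_mulVec, dotProduct_sub, smul_mulVec, dotProduct_smul, qf_vecMulVec,
    dot_col hDh, qf_expansion hDh, smul_eq_mul]
  have hcast : (t : ℂ) * (Complex.normSq (y i₀) : ℂ)
      - ∑ k, (hDh.eigenvalues k : ℂ) * Complex.normSq (y k)
      = ((t * Complex.normSq (y i₀)
          - ∑ k, hDh.eigenvalues k * Complex.normSq (y k) : ℝ) : ℂ) := by
    push_cast
    ring
  rw [hcast, Complex.zero_le_real, sub_nonneg]
  calc ∑ k, hDh.eigenvalues k * Complex.normSq (y k)
      ≤ ∑ k, (if k = i₀ then t * Complex.normSq (y i₀) else 0) := by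
        refine Finset.sum_le_sum fun k _ => ?_
        by_cases hk : k = i₀
        · subst hk
          simp only [if_pos rfl]
          exact mul_le_mul_of_nonneg_right hi₀t (Complex.normSq_nonneg _)
        · rw [if_neg hk]
          exact mul_nonpos_of_nonpos_of_nonneg (hi₀ k hk) (Complex.normSq_nonneg _)
    _ = t * Complex.normSq (y i₀) := by
        rw [Finset.sum_ite_eq' Finset.univ i₀]
        simp


/-! ### Continuity and compactness -/

lemma continuous_frobNorm : Continuous (fun Z : Matrix (Fin n) (Fin n) ℂ => frobNorm Z) := by
  apply Real.continuous_sqrt.comp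
  apply continuous_finset_sum
  intro i _
  apply continuous_finset_sum
  intro j _
  exact Complex.continuous_normSq.comp ((continuous_apply j).comp (continuous_apply i))

lemma continuous_vecNorm : Continuous (fun x : Fin n → ℂ => vecNorm x) := by
  apply Real.continuous_sqrt.comp
  apply continuous_finset_sum
  intro i _
  exact Complex.continuous_normSq.comp (continuous_apply i)

lemma isClosed_nonneg : IsClosed {c : ℂ | 0 ≤ c} := by
  have h : {c : ℂ | 0 ≤ c} = {c : ℂ | 0 ≤ c.re} ∩ {c : ℂ | c.im = 0} := by
    ext c
    simp [Complex.le_def, eq_comm]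
  rw [h]
  exact (isClosed_le continuous_const Complex.continuous_re).inter
    (isClosed_eq Complex.continuous_im continuous_const)

lemma entry_le_frobNorm (Z : Matrix (Fin n) (Fin n) ℂ) (i j : Fin n) :
    ‖Z i j‖ ≤ frobNorm Z := by
  have h1 : Complex.normSq (Z i j) ≤ ∑ a, ∑ b, Complex.normSq (Z a b) := by
    calc Complex.normSq (Z i j) ≤ ∑ b, Complex.normSq (Z i b) :=
          Finset.single_le_sum (fun b _ => Complex.normSq_nonneg _) (Finset.mem_univ j)
      _ ≤ ∑ a, ∑ b, Complex.normSq (Z a b) :=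
          Finset.single_le_sum (f := fun a => ∑ b, Complex.normSq (Z a b))
            (fun a _ => Finset.sum_nonneg fun b _ => Complex.normSq_nonneg _)
            (Finset.mem_univ i)
  have h2 : ‖Z i j‖ = Real.sqrt (Complex.normSq (Z i j)) := by
    rw [Complex.norm_def]
  rw [h2, frobNorm]
  exact Real.sqrt_le_sqrt h1

lemma coord_le_vecNorm (x : Fin n → ℂ) (i : Fin n) : ‖x i‖ ≤ vecNorm x := by
  have h1 : Complex.normSq (x i) ≤ ∑ a, Complex.normSq (x a) :=
    Finset.single_le_sum (fun a _ => Complex.normSq_nonneg _) (Finset.mem_univ i)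
  have h2 : ‖x i‖ = Real.sqrt (Complex.normSq (x i)) := by
    rw [Complex.norm_def]
  rw [h2, vecNorm]
  exact Real.sqrt_le_sqrt h1

lemma frobNorm_zero : frobNorm (0 : Matrix (Fin n) (Fin n) ℂ) = 0 := by
  simp [frobNorm]

lemma frobNorm_real_smul (r : ℝ) (Z : Matrix (Fin n) (Fin n) ℂ) :
    frobNorm ((r:ℂ) • Z) = |r| * frobNorm Z := by
  rw [frobNorm_eq, frobNorm_eq]
  have h : toE ((r:ℂ) • Z) = (r:ℂ) • toE Z := rfl
  rw [h, norm_smul]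
  simp

/-- The compact set of "normalized differences". -/
def K2 (n : ℕ) : Set (Matrix (Fin n) (Fin n) ℂ × (Fin n → ℂ)) :=
  {p | frobNorm p.1 = 1 ∧ vecNorm p.2 = 1 ∧ (vecMulVec p.2 (star p.2) - p.1).PosSemidef}

lemma isCompact_K2 : IsCompact (K2 n) := by
  have hclosed : IsClosed (K2 n) := by
    have h1 : IsClosed {p : Matrix (Fin n) (Fin n) ℂ × (Fin n → ℂ) | frobNorm p.1 = 1} :=
      isClosed_eq (continuous_frobNorm.comp continuous_fst) continuous_const
    have h2 : IsClosed {p : Matrix (Fin n) (Fin n) ℂ × (Fin n → ℂ) | vecNorm p.2 = 1} :=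
      isClosed_eq (continuous_vecNorm.comp continuous_snd) continuous_const
    have h3 : IsClosed {p : Matrix (Fin n) (Fin n) ℂ × (Fin n → ℂ) |
        (vecMulVec p.2 (star p.2) - p.1).PosSemidef} := by
      have heq : {p : Matrix (Fin n) (Fin n) ℂ × (Fin n → ℂ) |
          (vecMulVec p.2 (star p.2) - p.1).PosSemidef}
          = {p : Matrix (Fin n) (Fin n) ℂ × (Fin n → ℂ) |
              (vecMulVec p.2 (star p.2) - p.1).IsHermitian}
            ∩ ⋂ w : Fin n → ℂ, {p : Matrix (Fin n) (Fin n) ℂ × (Fin n → ℂ) |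
              0 ≤ star w ⬝ᵥ ((vecMulVec p.2 (star p.2) - p.1) *ᵥ w)} := by
        ext p
        simp only [Set.mem_setOf_eq, Set.mem_inter_iff, Set.mem_iInter]
        exact posSemidef_iff_dotProduct_mulVec
      rw [heq]
      refine IsClosed.inter ?_ (isClosed_iInter fun w => ?_)
      · have : Continuous (fun p : Matrix (Fin n) (Fin n) ℂ × (Fin n → ℂ) =>
            vecMulVec p.2 (star p.2) - p.1) := by
          refine Continuous.sub ?_ continuous_fst
          refine continuous_pi fun i => continuous_pi fun j => ?_
          exact (((continuous_apply i).comp continuous_snd).mul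
            (Complex.continuous_conj.comp ((continuous_apply j).comp continuous_snd)))
        have hc : Continuous (fun p : Matrix (Fin n) (Fin n) ℂ × (Fin n → ℂ) =>
            (vecMulVec p.2 (star p.2) - p.1)ᴴ) := by
          refine continuous_pi fun i => continuous_pi fun j => ?_
          have h5 : Continuous (fun p : Matrix (Fin n) (Fin n) ℂ × (Fin n → ℂ) =>
              (vecMulVec p.2 (star p.2) - p.1) j i) :=
            (continuous_apply i).comp ((continuous_apply j).comp this)
          exact Complex.continuous_conj.comp h5
        exact isClosed_eq hc this
      · refine IsClosed.preimage ?_ isClosed_nonneg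
        simp only [dotProduct, mulVec, Matrix.sub_apply, vecMulVec_apply, Pi.star_apply,
          Complex.star_def]
        apply continuous_finset_sum
        intro i _
        apply Continuous.mul continuous_const
        apply continuous_finset_sum
        intro j _
        refine Continuous.mul ?_ continuous_const
        refine Continuous.sub ?_ ?_
        · exact (((continuous_apply i).comp continuous_snd).mul
            (Complex.continuous_conj.comp ((continuous_apply j).comp continuous_snd)))
        · exact (continuous_apply j).comp ((continuous_apply i).comp continuous_fst)
    have : K2 n = _ ∩ (_ ∩ _) := rfl
    exact h1.inter (h2.inter h3)
  -- a compact superset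
  have hsub : K2 n ⊆
      (Set.univ.pi fun _ : Fin n => Set.univ.pi fun _ : Fin n => Metric.closedBall (0:ℂ) 1) ×ˢ
      (Set.univ.pi fun _ : Fin n => Metric.closedBall (0:ℂ) 1) := by
    rintro ⟨D, v⟩ ⟨h1, h2, _⟩
    constructor
    · intro i _
      intro j _
      simp only [Metric.mem_closedBall, dist_zero_right]
      calc ‖D i j‖ ≤ frobNorm D := entry_le_frobNorm D i j
        _ = 1 := h1
    · intro i _
      simp only [Metric.mem_closedBall, dist_zero_right]
      calc ‖v i‖ ≤ vecNorm v := coord_le_vecNorm v i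
        _ = 1 := h2
  have hcomp : IsCompact
      ((Set.univ.pi fun _ : Fin n => Set.univ.pi fun _ : Fin n => Metric.closedBall (0:ℂ) 1) ×ˢ
      (Set.univ.pi fun _ : Fin n => Metric.closedBall (0:ℂ) 1)) := by
    refine IsCompact.prod ?_ ?_
    · exact isCompact_univ_pi fun _ => isCompact_univ_pi fun _ =>
        isCompact_closedBall _ _
    · exact isCompact_univ_pi fun _ => isCompact_closedBall _ _
  exact hcomp.of_isClosed_subset hclosed hsub

/-! ### The robust constant -/

lemma exists_robust_const {m : ℕ}
    (M : Matrix (Fin n) (Fin n) ℂ →ₗ[ℝ] EuclideanSpace ℝ (Fin m))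
    (hM : rComplete M 1) :
    ∃ C > (0:ℝ), ∀ (x : Fin n → ℂ) (Y : Matrix (Fin n) (Fin n) ℂ), Y.PosSemidef →
      frobNorm (vecMulVec x (star x) - Y) ≤ C * ‖M (vecMulVec x (star x) - Y)‖ := by
  have hMcont : Continuous M := M.continuous_of_finiteDimensional
  -- a positive lower bound on ‖M D‖ over K2
  have key : ∃ c > (0:ℝ), ∀ p ∈ K2 n, c ≤ ‖M p.1‖ := by
    by_cases hK : (K2 n).Nonempty
    · obtain ⟨p₀, hp₀K, hmin⟩ := isCompact_K2.exists_isMinOn hK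
        ((hMcont.comp continuous_fst).norm.continuousOn)
      refine ⟨‖M p₀.1‖, ?_, fun p hp => isMinOn_iff.mp hmin p hp⟩
      obtain ⟨h1, h2, h3⟩ := hp₀K
      have hD0 : p₀.1 ≠ 0 := by
        intro h
        rw [h, frobNorm_zero] at h1
        norm_num at h1
      have hXne : vecMulVec p₀.2 (star p₀.2) ≠ vecMulVec p₀.2 (star p₀.2) - p₀.1 := by
        intro h
        apply hD0
        have := congrArg (fun W => vecMulVec p₀.2 (star p₀.2) - W) h
        simpa using this.symm
      have hMne := hM (vecMulVec p₀.2 (star p₀.2)) (vecMulVec p₀.2 (star p₀.2) - p₀.1)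
        (posSemidef_vecMulVec p₀.2) (rank_vecMulVec_le _ _) h3 hXne
      have : M p₀.1 ≠ 0 := by
        intro h
        apply hMne
        have hsplit : M (vecMulVec p₀.2 (star p₀.2))
            - M (vecMulVec p₀.2 (star p₀.2) - p₀.1) = M p₀.1 := by
          rw [← map_sub, sub_sub_cancel]
        rw [h] at hsplit
        exact sub_eq_zero.mp hsplit
      exact norm_pos_iff.mpr this
    · exact ⟨1, one_pos, fun p hp => absurd ⟨p, hp⟩ hK⟩
  obtain ⟨c, hc, hlow⟩ := key
  refine ⟨c⁻¹, inv_pos.mpr hc, fun x Y hY => ?_⟩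
  set D := vecMulVec x (star x) - Y with hDdef
  by_cases hD0 : D = 0
  · rw [hD0, frobNorm_zero]
    positivity
  · set t := frobNorm D with ht
    have htpos : 0 < t := by
      rcases lt_or_eq_of_le (frobNorm_nonneg D) with h | h
      · exact h
      · exact absurd (frobNorm_eq_zero h.symm) hD0
    obtain ⟨v, hv1, hvPSD⟩ := exists_unit_cover hY hD0
    have hmem : ((((t⁻¹:ℝ)):ℂ) • D, v) ∈ K2 n := by
      refine ⟨?_, hv1, ?_⟩
      · show frobNorm ((((t⁻¹:ℝ)):ℂ) • D) = 1
        rw [frobNorm_real_smul, abs_of_pos (inv_pos.mpr htpos), ← ht,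
          inv_mul_cancel₀ htpos.ne']
      · show (vecMulVec v (star v) - (((t⁻¹:ℝ)):ℂ) • D).PosSemidef
        have h9 : (((t⁻¹:ℝ)):ℂ) • ((((t:ℝ)):ℂ) • vecMulVec v (star v))
            = vecMulVec v (star v) := by
          rw [smul_smul, ← Complex.ofReal_mul, inv_mul_cancel₀ htpos.ne',
            Complex.ofReal_one, one_smul]
        have heq : vecMulVec v (star v) - (((t⁻¹:ℝ)):ℂ) • D
            = (((t⁻¹:ℝ)):ℂ) • ((((t:ℝ)):ℂ) • vecMulVec v (star v) - D) :=
          by rw [smul_sub (((t⁻¹:ℝ)):ℂ) ((((t:ℝ)):ℂ) • vecMulVec v (star v)) D, h9]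
        rw [heq]
        exact posSemidef_real_smul hvPSD (inv_nonneg.mpr htpos.le)
    have hlow' := hlow _ hmem
    have hnorm : ‖M ((((t⁻¹:ℝ)):ℂ) • D)‖ = t⁻¹ * ‖M D‖ := by
      rw [real_smul_matrix, _root_.map_smul, norm_smul, Real.norm_eq_abs,
        abs_of_pos (inv_pos.mpr htpos)]
    rw [show ((((t⁻¹:ℝ)):ℂ) • D, v).1 = (((t⁻¹:ℝ)):ℂ) • D from rfl, hnorm] at hlow'
    have h1 : c * t ≤ ‖M D‖ := by
      have := mul_le_mul_of_nonneg_left hlow' htpos.le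
      rw [← mul_assoc, mul_inv_cancel₀ htpos.ne', one_mul] at this
      linarith [this]
    calc t = c⁻¹ * (c * t) := by field_simp
      _ ≤ c⁻¹ * ‖M D‖ := by
        exact mul_le_mul_of_nonneg_left h1 (inv_pos.mpr hc).le

/-! ### Frobenius expansion and Eckart-Young-lite -/

lemma normSq_sub' (a b : ℂ) : Complex.normSq (a - b)
    = Complex.normSq a + Complex.normSq b - 2 * (a * (starRingEnd ℂ) b).re := by
  rw [Complex.normSq_sub]

lemma frob_expand (A B : Matrix (Fin n) (Fin n) ℂ) :
    ∑ i, ∑ j, Complex.normSq (A i j - B i j)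
      = (∑ i, ∑ j, Complex.normSq (A i j)) + (∑ i, ∑ j, Complex.normSq (B i j))
        - 2 * (∑ i, ∑ j, (A i j * (starRingEnd ℂ) (B i j)).re) := by
  simp only [normSq_sub']
  rw [Finset.mul_sum, ← Finset.sum_add_distrib, ← Finset.sum_sub_distrib]
  refine Finset.sum_congr rfl fun i _ => ?_
  rw [Finset.mul_sum, ← Finset.sum_add_distrib, ← Finset.sum_sub_distrib]

lemma sum_normSq_prod (u w : Fin n → ℂ) :
    ∑ i, ∑ j, Complex.normSq (u i * (starRingEnd ℂ) (w j))
      = (∑ i, Complex.normSq (u i)) * (∑ j, Complex.normSq (w j)) := by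
  rw [Finset.sum_mul_sum]
  refine Finset.sum_congr rfl fun i _ => Finset.sum_congr rfl fun j _ => ?_
  rw [Complex.normSq_mul, Complex.normSq_conj]

lemma vecNorm_pos {x : Fin n → ℂ} (hx : x ≠ 0) : 0 < vecNorm x := by
  rcases lt_or_eq_of_le (vecNorm_nonneg x) with h | h
  · exact h
  · exfalso
    apply hx
    have h2 : ∑ i, Complex.normSq (x i) = 0 := by
      have := vecNorm_sq x
      rw [← h] at this
      simpa using this.symm
    funext i
    have h3 : Complex.normSq (x i) = 0 := by
      have h4 := Finset.sum_eq_zero_iff_of_nonneg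
        (fun j (_ : j ∈ Finset.univ) => Complex.normSq_nonneg (x j)) |>.mp h2
      exact h4 i (Finset.mem_univ i)
    simpa using Complex.normSq_eq_zero.mp h3

lemma eckart {Y : Matrix (Fin n) (Fin n) ℂ} (hY : Y.PosSemidef) {μ : ℝ}
    (hb : ∀ i, hY.1.eigenvalues i ≤ μ) (x' : Fin n → ℂ) (hx'1 : vecNorm x' = 1)
    (heig : Y *ᵥ x' = (μ:ℂ) • x') (x : Fin n → ℂ) :
    frobNorm (Y - (μ:ℂ) • vecMulVec x' (star x')) ≤ frobNorm (vecMulVec x (star x) - Y) := by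
  set A := vecMulVec x (star x) with hA
  set W := (μ:ℂ) • vecMulVec x' (star x') with hW
  have hWij : ∀ i j, W i j = (μ:ℂ) * (x' i * (starRingEnd ℂ) (x' j)) := by
    intro i j
    simp [hW, vecMulVec_apply, Complex.star_def]
  have hAij : ∀ i j, A i j = x i * (starRingEnd ℂ) (x j) := by
    intro i j
    simp [hA, vecMulVec_apply, Complex.star_def]
  have hx'sum : ∑ i, Complex.normSq (x' i) = 1 := by
    have := vecNorm_sq x'
    rw [hx'1] at this
    simpa using this.symm
  set a := (vecNorm x)^2 with ha
  have ha0 : 0 ≤ a := sq_nonneg _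
  have hasum : ∑ i, Complex.normSq (x i) = a := (vecNorm_sq x).symm
  have hYx : ∀ i, (∑ j, Y i j * x' j) = (μ:ℂ) * x' i := by
    intro i
    have := congrFun heig i
    simpa [mulVec, dotProduct, Complex.real_smul] using this
  -- ∑ normSq W = μ²
  have h1 : ∑ i, ∑ j, Complex.normSq (W i j) = μ^2 := by
    calc ∑ i, ∑ j, Complex.normSq (W i j)
        = ∑ i, ∑ j, (μ^2) * (Complex.normSq (x' i) * Complex.normSq (x' j)) := by
          refine Finset.sum_congr rfl fun i _ => Finset.sum_congr rfl fun j _ => ?_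
          rw [hWij i j, Complex.normSq_mul, Complex.normSq_mul, Complex.normSq_conj,
            Complex.normSq_ofReal]
          ring
      _ = (μ^2) * ((∑ i, Complex.normSq (x' i)) * (∑ j, Complex.normSq (x' j))) := by
          rw [Finset.sum_mul_sum, Finset.mul_sum]
          refine Finset.sum_congr rfl fun i _ => ?_
          rw [Finset.mul_sum]
      _ = μ^2 := by rw [hx'sum]; ring
  -- complex cross sum for (Y, W)
  have h2c : ∑ i, ∑ j, (Y i j * (starRingEnd ℂ) (W i j)) = ((μ^2 : ℝ) : ℂ) := by
    calc ∑ i, ∑ j, (Y i j * (starRingEnd ℂ) (W i j))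
        = ∑ i, ((μ:ℂ) * (starRingEnd ℂ) (x' i)) * (∑ j, Y i j * x' j) := by
          refine Finset.sum_congr rfl fun i _ => ?_
          rw [Finset.mul_sum]
          refine Finset.sum_congr rfl fun j _ => ?_
          rw [hWij i j]
          simp only [_root_.map_mul, Complex.conj_conj, Complex.conj_ofReal]
          ring
      _ = ∑ i, ((μ:ℂ) * (μ:ℂ)) * ((starRingEnd ℂ) (x' i) * x' i) := by
          refine Finset.sum_congr rfl fun i _ => ?_
          rw [hYx i]
          ring
      _ = ((μ:ℂ) * (μ:ℂ)) * ∑ i, ((starRingEnd ℂ) (x' i) * x' i) := by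
          rw [Finset.mul_sum]
      _ = ((μ^2 : ℝ) : ℂ) := by
          have : ∑ i, ((starRingEnd ℂ) (x' i) * x' i)
              = ∑ i, ((Complex.normSq (x' i) : ℝ) : ℂ) := by
            refine Finset.sum_congr rfl fun i _ => ?_
            rw [Complex.normSq_eq_conj_mul_self]
          rw [this, ← Complex.ofReal_sum, hx'sum]
          push_cast
          ring
  have h2 : ∑ i, ∑ j, (Y i j * (starRingEnd ℂ) (W i j)).re = μ^2 := by
    have := congrArg Complex.re h2c
    simpa [Complex.re_sum, ← Complex.ofReal_pow] using this
  -- complex cross sum for (A, Y)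
  have h3c : ∑ i, ∑ j, (A i j * (starRingEnd ℂ) (Y i j)) = star x ⬝ᵥ (Y *ᵥ x) := by
    calc ∑ i, ∑ j, (A i j * (starRingEnd ℂ) (Y i j))
        = ∑ i, ∑ j, (x i * (starRingEnd ℂ) (x j)) * Y j i := by
          refine Finset.sum_congr rfl fun i _ => Finset.sum_congr rfl fun j _ => ?_
          rw [hAij i j]
          congr 1
          have := congrFun (congrFun hY.1 j) i
          rw [conjTranspose_apply] at this
          rw [← this]
          simp [Complex.star_def]
      _ = ∑ j, (starRingEnd ℂ) (x j) * (∑ i, Y j i * x i) := by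
          rw [Finset.sum_comm]
          refine Finset.sum_congr rfl fun j _ => ?_
          rw [Finset.mul_sum]
          refine Finset.sum_congr rfl fun i _ => ?_
          ring
      _ = star x ⬝ᵥ (Y *ᵥ x) := by
          simp [dotProduct, mulVec, Complex.star_def]
  -- q ≤ μ a
  have h4 : (star x ⬝ᵥ (Y *ᵥ x)).re ≤ μ * a := by
    set U := (Matrix.IsHermitian.eigenvectorUnitary hY.1 : Matrix (Fin n) (Fin n) ℂ) with hU
    set y := (star U) *ᵥ x with hy
    have hxy : x = U *ᵥ y := param hY.1 x
    have hqf : star x ⬝ᵥ (Y *ᵥ x)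
        = ∑ k, (hY.1.eigenvalues k : ℂ) * Complex.normSq (y k) := by
      rw [hxy]
      exact qf_expansion hY.1 y
    have hsum : star x ⬝ᵥ x = star y ⬝ᵥ y := by
      rw [hxy]
      exact dot_U hY.1 y y
    have hacomp : a = ∑ k, Complex.normSq (y k) := by
      have e1 : star x ⬝ᵥ x = ((a : ℝ) : ℂ) := dot_self x
      have e2 : star y ⬝ᵥ y = (((vecNorm y)^2 : ℝ) : ℂ) := dot_self y
      have e3 : ((a:ℝ):ℂ) = (((vecNorm y)^2 : ℝ):ℂ) := by rw [← e1, hsum, e2]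
      have e4 : a = (vecNorm y)^2 := by exact_mod_cast e3
      rw [e4, vecNorm_sq]
    have hqfre : (star x ⬝ᵥ (Y *ᵥ x)).re = ∑ k, hY.1.eigenvalues k * Complex.normSq (y k) := by
      have : star x ⬝ᵥ (Y *ᵥ x)
          = ((∑ k, hY.1.eigenvalues k * Complex.normSq (y k) : ℝ) : ℂ) := by
        rw [hqf]
        push_cast
        rfl
      rw [this, Complex.ofReal_re]
    rw [hqfre, hacomp, Finset.mul_sum]
    refine Finset.sum_le_sum fun k _ => ?_
    exact mul_le_mul_of_nonneg_right (hb k) (Complex.normSq_nonneg _)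
  -- ∑ normSq A = a²
  have h5 : ∑ i, ∑ j, Complex.normSq (A i j) = a^2 := by
    calc ∑ i, ∑ j, Complex.normSq (A i j)
        = ∑ i, ∑ j, Complex.normSq (x i * (starRingEnd ℂ) (x j)) := by
          refine Finset.sum_congr rfl fun i _ => Finset.sum_congr rfl fun j _ => ?_
          rw [hAij i j]
      _ = (∑ i, Complex.normSq (x i)) * (∑ j, Complex.normSq (x j)) := sum_normSq_prod x x
      _ = a^2 := by rw [hasum]; ring
  -- assemble
  have f1 : (frobNorm (Y - W))^2 = (∑ i, ∑ j, Complex.normSq (Y i j)) - μ^2 := by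
    rw [frobNorm_sq]
    have := frob_expand Y W
    simp only [Matrix.sub_apply] at this ⊢
    rw [this, h1, h2]
    ring
  have f2 : (frobNorm (A - Y))^2
      = a^2 + (∑ i, ∑ j, Complex.normSq (Y i j)) - 2 * (star x ⬝ᵥ (Y *ᵥ x)).re := by
    rw [frobNorm_sq]
    have := frob_expand A Y
    have h3r : ∑ i, ∑ j, (A i j * (starRingEnd ℂ) (Y i j)).re = (star x ⬝ᵥ (Y *ᵥ x)).re := by
      have := congrArg Complex.re h3c
      simpa [Complex.re_sum] using this
    simp only [Matrix.sub_apply] at this ⊢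
    rw [this, h5, h3r]
    try ring
  have hle : (frobNorm (Y - W))^2 ≤ (frobNorm (A - Y))^2 := by
    rw [f1, f2]
    nlinarith [h4, sq_nonneg (a - μ)]
  nlinarith [frobNorm_nonneg (Y - W), frobNorm_nonneg (A - Y)]

/-! ### Phase retrieval vector bound -/

lemma exists_phase (c : ℂ) (hc : ‖c‖ = 1) :
    ∃ φ ∈ Set.Ico (0:ℝ) (2*Real.pi), Complex.exp (φ * Complex.I) = c := by
  have habs : ‖c‖ = 1 := hc
  have hexp : Complex.exp (c.arg * Complex.I) = c := by
    have := Complex.norm_mul_exp_arg_mul_I c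
    rw [habs] at this
    simpa using this
  have harg1 : c.arg ≤ Real.pi := Complex.arg_le_pi c
  have harg2 : -Real.pi < c.arg := Complex.neg_pi_lt_arg c
  have hpi : 0 < Real.pi := Real.pi_pos
  by_cases h : 0 ≤ c.arg
  · exact ⟨c.arg, ⟨h, by linarith⟩, hexp⟩
  · push_neg at h
    refine ⟨c.arg + 2*Real.pi, ⟨by linarith, by linarith⟩, ?_⟩
    have : ((c.arg + 2*Real.pi : ℝ) : ℂ) * Complex.I
        = c.arg * Complex.I + 2*Real.pi*Complex.I := by
      push_cast
      ring
    rw [this, Complex.exp_add, Complex.exp_two_pi_mul_I, mul_one, hexp]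

lemma real_ineq {p q s : ℝ} (hp : 0 ≤ p) (hq : 0 ≤ q) (hs : 0 ≤ s) (hCS : s ≤ q * p) :
    (p^2 + q^2 - 2*s) * p^2 ≤ 2 * (p^4 + q^4 - 2*s^2) := by
  have hf0 : 0 ≤ p^4 - p^2*q^2 + 2*q^4 := by nlinarith [sq_nonneg (2*p^2 - q^2), sq_nonneg q]
  have hfqp : 0 ≤ (p-q)^2*(p^2+4*p*q+2*q^2) := mul_nonneg (sq_nonneg _) (by positivity)
  nlinarith [mul_nonneg (mul_nonneg (mul_nonneg hq hp) hs) (sub_nonneg.mpr hCS),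
    mul_nonneg (sub_nonneg.mpr hCS) hf0, mul_nonneg hs hfqp,
    mul_nonneg hq hp, sq_nonneg (p - q), sq_nonneg (p*q - s)]

lemma frob_diff_rank_one (x v : Fin n → ℂ) :
    (frobNorm (vecMulVec x (star x) - vecMulVec v (star v)))^2
      = (vecNorm x)^4 + (vecNorm v)^4 - 2 * ‖star v ⬝ᵥ x‖^2 := by
  set S := star v ⬝ᵥ x with hS
  rw [frobNorm_sq]
  simp only [Matrix.sub_apply]
  rw [frob_expand (vecMulVec x (star x)) (vecMulVec v (star v))]
  have e1 : ∑ i, ∑ j, Complex.normSq ((vecMulVec x (star x)) i j) = (vecNorm x)^4 := by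
    calc ∑ i, ∑ j, Complex.normSq ((vecMulVec x (star x)) i j)
        = ∑ i, ∑ j, Complex.normSq (x i * (starRingEnd ℂ) (x j)) := by
          refine Finset.sum_congr rfl fun i _ => Finset.sum_congr rfl fun j _ => ?_
          simp [vecMulVec_apply, Complex.star_def]
      _ = (∑ i, Complex.normSq (x i)) * (∑ j, Complex.normSq (x j)) := sum_normSq_prod x x
      _ = (vecNorm x)^4 := by rw [← vecNorm_sq]; ring
  have e2 : ∑ i, ∑ j, Complex.normSq ((vecMulVec v (star v)) i j) = (vecNorm v)^4 := by
    calc ∑ i, ∑ j, Complex.normSq ((vecMulVec v (star v)) i j)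
        = ∑ i, ∑ j, Complex.normSq (v i * (starRingEnd ℂ) (v j)) := by
          refine Finset.sum_congr rfl fun i _ => Finset.sum_congr rfl fun j _ => ?_
          simp [vecMulVec_apply, Complex.star_def]
      _ = (∑ i, Complex.normSq (v i)) * (∑ j, Complex.normSq (v j)) := sum_normSq_prod v v
      _ = (vecNorm v)^4 := by rw [← vecNorm_sq]; ring
  have e3c : ∑ i, ∑ j, ((vecMulVec x (star x)) i j
        * (starRingEnd ℂ) ((vecMulVec v (star v)) i j)) = ((Complex.normSq S : ℝ) : ℂ) := by
    calc ∑ i, ∑ j, ((vecMulVec x (star x)) i j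
          * (starRingEnd ℂ) ((vecMulVec v (star v)) i j))
        = ∑ i, ∑ j, ((x i * (starRingEnd ℂ) (v i)) * ((starRingEnd ℂ) (x j) * v j)) := by
          refine Finset.sum_congr rfl fun i _ => Finset.sum_congr rfl fun j _ => ?_
          simp only [vecMulVec_apply, Pi.star_apply, Complex.star_def, _root_.map_mul,
            Complex.conj_conj]
          ring
      _ = (∑ i, (x i * (starRingEnd ℂ) (v i))) * (∑ j, ((starRingEnd ℂ) (x j) * v j)) := by
          rw [Finset.sum_mul_sum]
      _ = S * (starRingEnd ℂ) S := by
          congr 1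
          · rw [hS, dotProduct]
            refine Finset.sum_congr rfl fun i _ => ?_
            simp [Complex.star_def]
            ring
          · rw [hS, dotProduct, map_sum]
            refine Finset.sum_congr rfl fun j _ => ?_
            simp [Complex.star_def]
            ring
      _ = ((Complex.normSq S : ℝ) : ℂ) := by
          rw [Complex.mul_conj]
  have e3 : ∑ i, ∑ j, ((vecMulVec x (star x)) i j
        * (starRingEnd ℂ) ((vecMulVec v (star v)) i j)).re = ‖S‖^2 := by
    have := congrArg Complex.re e3c
    simp only [Complex.re_sum, Complex.ofReal_re] at this
    rw [this, normSq_eq]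
  rw [e1, e2, e3]

lemma vecNorm_phase_expand (x v : Fin n → ℂ) (c : ℂ) (hc : ‖c‖ = 1) :
    (vecNorm (x - c • v))^2 = (vecNorm x)^2 + (vecNorm v)^2
      - 2 * ((starRingEnd ℂ) c * (star v ⬝ᵥ x)).re := by
  rw [vecNorm_sq]
  have hterm : ∀ i, Complex.normSq ((x - c • v) i)
      = Complex.normSq (x i) + Complex.normSq (v i)
        - 2 * (x i * ((starRingEnd ℂ) c * (starRingEnd ℂ) (v i))).re := by
    intro i
    have hxi : (x - c • v) i = x i - c * v i := by simp
    have hc2 : Complex.normSq c = 1 := by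
      have := normSq_eq c
      rw [hc] at this
      simpa using this
    rw [hxi, normSq_sub', Complex.normSq_mul, hc2, one_mul, _root_.map_mul]
  simp only [hterm]
  rw [Finset.sum_sub_distrib, Finset.sum_add_distrib, ← vecNorm_sq, ← vecNorm_sq]
  congr 1
  rw [← Finset.mul_sum]
  congr 1
  have : ((starRingEnd ℂ) c * (star v ⬝ᵥ x)).re
      = (∑ i, x i * ((starRingEnd ℂ) c * (starRingEnd ℂ) (v i))).re := by
    congr 1
    rw [dotProduct, Finset.mul_sum]
    refine Finset.sum_congr rfl fun i _ => ?_
    simp [Complex.star_def]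
    ring
  rw [this, Complex.re_sum]

lemma phase_bound (x v : Fin n → ℂ) (hx : x ≠ 0) :
    ∃ φ ∈ Set.Ico (0:ℝ) (2*Real.pi),
      vecNorm (x - Complex.exp (φ * Complex.I) • v)
        ≤ Real.sqrt 2 * frobNorm (vecMulVec x (star x) - vecMulVec v (star v)) / vecNorm x := by
  set S := star v ⬝ᵥ x with hS
  set p := vecNorm x with hp
  set q := vecNorm v with hq
  set δ := frobNorm (vecMulVec x (star x) - vecMulVec v (star v)) with hδ
  have hp0 : 0 < p := vecNorm_pos hx
  have hq0 : 0 ≤ q := vecNorm_nonneg v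
  have hδ0 : 0 ≤ δ := frobNorm_nonneg _
  set c : ℂ := if S = 0 then 1 else S / ‖S‖ with hc
  have hc1 : ‖c‖ = 1 := by
    rw [hc]
    by_cases h : S = 0
    · simp [h]
    · have hSn : ‖S‖ ≠ 0 := norm_ne_zero_iff.mpr h
      rw [if_neg h, norm_div]
      have : ‖((‖S‖:ℝ):ℂ)‖ = ‖S‖ := by
        simp [Complex.norm_real]
      rw [this]
      exact div_self hSn
  have hcS : (starRingEnd ℂ) c * S = (‖S‖ : ℂ) := by
    by_cases h : S = 0
    · simp [hc, h]
    · have hSn : (‖S‖:ℝ) ≠ 0 := norm_ne_zero_iff.mpr h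
      have hne : ((‖S‖:ℝ):ℂ) ≠ 0 := by exact_mod_cast hSn
      rw [hc, if_neg h, map_div₀, Complex.conj_ofReal, div_mul_eq_mul_div, mul_comm,
        Complex.mul_conj, div_eq_iff hne]
      norm_cast
      rw [Complex.normSq_eq_norm_sq, sq]
  obtain ⟨φ, hφmem, hφ⟩ := exists_phase c hc1
  refine ⟨φ, hφmem, ?_⟩
  rw [hφ]
  -- expansions
  have hvec : (vecNorm (x - c • v))^2 = p^2 + q^2 - 2 * ‖S‖ := by
    rw [vecNorm_phase_expand x v c hc1, ← hS, hcS]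
    simp [hp, hq]
  have hfrob : δ^2 = p^4 + q^4 - 2*‖S‖^2 := by
    rw [hδ, frob_diff_rank_one, hS]
  have hCS : ‖S‖ ≤ q * p := by
    rw [hS]
    exact cauchySchwarz v x
  have key : (p^2 + q^2 - 2*‖S‖) * p^2 ≤ 2 * (p^4 + q^4 - 2*‖S‖^2) :=
    real_ineq hp0.le hq0 (norm_nonneg S) hCS
  set R := Real.sqrt 2 * δ / p with hR
  have hR0 : 0 ≤ R := by positivity
  have hR2 : R^2 * p^2 = 2 * δ^2 := by
    rw [hR, div_pow, mul_pow, Real.sq_sqrt (by norm_num : (0:ℝ) ≤ 2)]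
    field_simp
  have hw2 : (vecNorm (x - c • v))^2 * p^2 ≤ 2*δ^2 := by
    rw [hvec]
    nlinarith [key, hfrob]
  have hsq : (vecNorm (x - c • v))^2 ≤ R^2 := by
    nlinarith [hw2, hR2, mul_pos hp0 hp0]
  nlinarith [vecNorm_nonneg (x - c • v), hR0, hsq]

end Stmt11Aux

/-- stability of phase retrieval.  Let `M` be `1`-complete.  There is a
constant `C > 0` depending only on `M` such that: for nonzero `x ∈ ℂⁿ`, Hermitian `E`,
`ε ≥ ‖M(E)‖₂` with `ε > 0`, any PSD minimizer `Y` of the trace over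
`{Y ⪰ 0 : ‖M(Y) − M(xx* + E)‖₂ ≤ ε}`, any largest eigenvalue `μ = λ₁(Y)` with unit
eigenvector `x′`, and `x̂ := √μ·x′`, one has `‖xx* − x̂x̂*‖₂ ≤ 2Cε` and there is
`φ ∈ [0,2π)` with `‖x − e^{iφ}x̂‖₂ ≤ (2√2·C/‖x‖₂)·ε`. -/
theorem stmt11 {n m : ℕ}
    (M : Matrix (Fin n) (Fin n) ℂ →ₗ[ℝ] EuclideanSpace ℝ (Fin m))
    (hM : rComplete M 1) :
    ∃ C > (0 : ℝ),
      ∀ x : Fin n → ℂ, x ≠ 0 →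
      ∀ E : Matrix (Fin n) (Fin n) ℂ, E.IsHermitian →
      ∀ ε > (0 : ℝ), ‖M E‖ ≤ ε →
      ∀ Y : Matrix (Fin n) (Fin n) ℂ, ∀ hY : Y.PosSemidef,
        ‖M Y - M (vecMulVec x (star x) + E)‖ ≤ ε →
        (∀ Z : Matrix (Fin n) (Fin n) ℂ, Z.PosSemidef →
          ‖M Z - M (vecMulVec x (star x) + E)‖ ≤ ε → (Y.trace).re ≤ (Z.trace).re) →
      ∀ μ : ℝ, (∀ i, hY.1.eigenvalues i ≤ μ) → (∃ i, hY.1.eigenvalues i = μ) →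
      ∀ x' : Fin n → ℂ, vecNorm x' = 1 → Y.mulVec x' = (μ : ℂ) • x' →
        frobNorm (vecMulVec x (star x) -
            vecMulVec (Real.sqrt μ • x') (star (Real.sqrt μ • x'))) ≤ 2 * C * ε ∧
        ∃ φ ∈ Set.Ico (0 : ℝ) (2 * Real.pi),
          vecNorm (x - Complex.exp (φ * Complex.I) • Real.sqrt μ • x') ≤
            2 * Real.sqrt 2 * C / vecNorm x * ε := by
  classical
  obtain ⟨C₀, hC₀, hrobust⟩ := Stmt11Aux.exists_robust_const M hM
  refine ⟨2*C₀, by positivity, ?_⟩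
  intro x hx E hE ε hε hME Y hY hYfeas hmin μ hμub hμex x' hx'1 hx'eig
  set A := vecMulVec x (star x) with hA
  obtain ⟨i₀, hi₀⟩ := hμex
  have hμ0 : 0 ≤ μ := hi₀ ▸ hY.eigenvalues_nonneg i₀
  have hp0 : 0 < vecNorm x := Stmt11Aux.vecNorm_pos hx
  -- measurement bound on A - Y
  have hMD : ‖M (A - Y)‖ ≤ 2*ε := by
    have h1 : M (A - Y) = -(M Y - M (A + E)) - M E := by
      simp only [map_sub, map_add]
      abel
    rw [h1]
    calc ‖-(M Y - M (A + E)) - M E‖ ≤ ‖-(M Y - M (A + E))‖ + ‖M E‖ := norm_sub_le _ _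
      _ = ‖M Y - M (A + E)‖ + ‖M E‖ := by rw [norm_neg]
      _ ≤ ε + ε := add_le_add hYfeas hME
      _ = 2*ε := by ring
  have hfrobAY : frobNorm (A - Y) ≤ 2*C₀*ε := by
    calc frobNorm (A - Y) ≤ C₀ * ‖M (A - Y)‖ := hrobust x Y hY
      _ ≤ C₀ * (2*ε) := mul_le_mul_of_nonneg_left hMD hC₀.le
      _ = 2*C₀*ε := by ring
  -- the rank-one truncation
  have hW : vecMulVec (Real.sqrt μ • x') (star (Real.sqrt μ • x'))
      = (μ:ℂ) • vecMulVec x' (star x') := by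
    ext i j
    simp only [vecMulVec_apply, Pi.star_apply, Pi.smul_apply, Matrix.smul_apply,
      Complex.real_smul, Complex.star_def, _root_.map_mul, Complex.conj_ofReal,
      smul_eq_mul]
    have : ((Real.sqrt μ : ℝ) : ℂ) * ((Real.sqrt μ : ℝ) : ℂ) = (μ : ℂ) := by
      norm_cast
      exact Real.mul_self_sqrt hμ0
    calc (Real.sqrt μ : ℂ) * x' i * ((Real.sqrt μ : ℂ) * (starRingEnd ℂ) (x' j))
        = ((Real.sqrt μ : ℂ) * (Real.sqrt μ : ℂ)) * (x' i * (starRingEnd ℂ) (x' j)) := by ring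
      _ = (μ:ℂ) * (x' i * (starRingEnd ℂ) (x' j)) := by rw [this]
  have heck := Stmt11Aux.eckart hY hμub x' hx'1 hx'eig x
  have hpart1 : frobNorm (A - vecMulVec (Real.sqrt μ • x') (star (Real.sqrt μ • x')))
      ≤ 2 * (2*C₀) * ε := by
    rw [hW]
    calc frobNorm (A - (μ:ℂ) • vecMulVec x' (star x'))
        ≤ frobNorm (A - Y) + frobNorm (Y - (μ:ℂ) • vecMulVec x' (star x')) :=
          Stmt11Aux.frobNorm_triangle _ _ _
      _ ≤ frobNorm (A - Y) + frobNorm (A - Y) := add_le_add le_rfl heck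
      _ ≤ (2*C₀*ε) + (2*C₀*ε) := add_le_add hfrobAY hfrobAY
      _ = 2 * (2*C₀) * ε := by ring
  refine ⟨hpart1, ?_⟩
  obtain ⟨φ, hφmem, hφbound⟩ := Stmt11Aux.phase_bound x (Real.sqrt μ • x') hx
  refine ⟨φ, hφmem, ?_⟩
  calc vecNorm (x - Complex.exp (φ * Complex.I) • Real.sqrt μ • x')
      ≤ Real.sqrt 2 * frobNorm (vecMulVec x (star x)
          - vecMulVec (Real.sqrt μ • x') (star (Real.sqrt μ • x'))) / vecNorm x := hφbound
    _ ≤ Real.sqrt 2 * (2 * (2*C₀) * ε) / vecNorm x := by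
        gcongr
    _ = 2 * Real.sqrt 2 * (2*C₀) / vecNorm x * ε := by
        field_simp
end
end

section
/- Let M : H(n) → ℝ^m be an r-complete measurement with nontrivial kernel. Then every nonzero Z ∈ Ker(M) satisfies λ_{n−r}(Z) < 0; consequently κ := −max{λ_{n−r}(Z) : Z ∈ Ker(M), ‖Z‖₂ = 1} is well defined (the maximum is attained) and κ > 0. -/
open Matrix
open scoped ComplexOrder

noncomputable section

/-- The eigenvalues of a Hermitian matrix listed in decreasing order (with multiplicity);
`eigenvaluesDesc hZ i` is `λ_{i+1}(Z)` in the paper's (1-based) notation. -/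
noncomputable def eigenvaluesDesc {n : ℕ} {Z : Matrix (Fin n) (Fin n) ℂ}
    (hZ : Z.IsHermitian) : Fin n → ℝ :=
  fun i => hZ.eigenvalues (Tuple.sort hZ.eigenvalues i.rev)

open Finset

namespace Stmt12Aux

variable {n : ℕ}

def descPerm {Z : Matrix (Fin n) (Fin n) ℂ} (hZ : Z.IsHermitian) : Equiv.Perm (Fin n) :=
  Fin.revPerm.trans (Tuple.sort hZ.eigenvalues)

lemma eigenvaluesDesc_eq {Z : Matrix (Fin n) (Fin n) ℂ} (hZ : Z.IsHermitian) :
    eigenvaluesDesc hZ = hZ.eigenvalues ∘ (descPerm hZ) := rfl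

lemma antitone_eigenvaluesDesc {Z : Matrix (Fin n) (Fin n) ℂ} (hZ : Z.IsHermitian) :
    Antitone (eigenvaluesDesc hZ) := by
  intro i j hij
  exact Tuple.monotone_sort hZ.eigenvalues (Fin.rev_le_rev.mpr hij)

lemma conj_perm (V : Matrix (Fin n) (Fin n) ℂ) (d : Fin n → ℂ) (π : Equiv.Perm (Fin n)) :
    V * diagonal d * star V =
      (V.submatrix id ⇑π) * diagonal (d ∘ π) * star (V.submatrix id ⇑π) := by
  rw [star_eq_conjTranspose, star_eq_conjTranspose, conjTranspose_submatrix,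
    ← submatrix_diagonal_equiv, submatrix_mul_equiv, submatrix_mul_equiv, submatrix_id_id]

lemma star_submatrix_unitary {V : Matrix (Fin n) (Fin n) ℂ} (hV : star V * V = 1)
    (π : Equiv.Perm (Fin n)) :
    star (V.submatrix id ⇑π) * V.submatrix id ⇑π = 1 := by
  rw [star_eq_conjTranspose, conjTranspose_submatrix, ← star_eq_conjTranspose,
    ← Equiv.coe_refl, submatrix_mul_equiv, hV, submatrix_one_equiv]

lemma exists_desc_decomp {Z : Matrix (Fin n) (Fin n) ℂ} (hZ : Z.IsHermitian) :
    ∃ V : Matrix (Fin n) (Fin n) ℂ, star V * V = 1 ∧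
      Z = V * diagonal (fun i => (eigenvaluesDesc hZ i : ℂ)) * star V := by
  refine ⟨((hZ.eigenvectorUnitary : Matrix (Fin n) (Fin n) ℂ)).submatrix id ⇑(descPerm hZ),
    star_submatrix_unitary (mem_unitaryGroup_iff'.mp hZ.eigenvectorUnitary.2) _, ?_⟩
  have h := hZ.spectral_theorem
  rw [Unitary.conjStarAlgAut_apply, conj_perm] at h
  convert h using 3
  rfl

end Stmt12Aux

namespace Stmt12Aux

variable {n : ℕ}

lemma isUnit_det_of_unitary {V : Matrix (Fin n) (Fin n) ℂ} (hV : star V * V = 1) :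
    IsUnit V.det := by
  have hVV : V * star V = 1 := mul_eq_one_comm.mp hV
  exact IsUnit.of_mul_eq_one _ (by rw [← det_mul, hVV, det_one])

lemma isUnit_det_star_of_unitary {V : Matrix (Fin n) (Fin n) ℂ} (hV : star V * V = 1) :
    IsUnit (star V).det :=
  IsUnit.of_mul_eq_one _ (by rw [← det_mul, hV, det_one])

lemma rank_conj {V : Matrix (Fin n) (Fin n) ℂ} (hV : star V * V = 1) (d : Fin n → ℂ) :
    (V * diagonal d * star V).rank = (univ.filter fun i => d i ≠ 0).card := by
  rw [rank_mul_eq_left_of_isUnit_det _ _ (isUnit_det_star_of_unitary hV),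
    rank_mul_eq_right_of_isUnit_det _ _ (isUnit_det_of_unitary hV),
    rank_diagonal, Fintype.card_subtype]

lemma rank_sub_smul {V : Matrix (Fin n) (Fin n) ℂ} (hV : star V * V = 1) (w : Fin n → ℝ)
    (t : ℝ) :
    ((V * diagonal (fun i => (w i : ℂ)) * star V) - (t : ℂ) • 1).rank
      = (univ.filter fun i => w i ≠ t).card := by
  have hVV : V * star V = 1 := mul_eq_one_comm.mp hV
  have key : (V * diagonal (fun i => (w i : ℂ)) * star V) - (t : ℂ) • 1
      = V * diagonal (fun i => ((w i - t : ℝ) : ℂ)) * star V := by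
    have h1 : diagonal (fun i => ((w i - t : ℝ) : ℂ))
        = diagonal (fun i => (w i : ℂ)) - (t : ℂ) • (1 : Matrix (Fin n) (Fin n) ℂ) := by
      ext i j
      rcases eq_or_ne i j with rfl | h
      · simp only [diagonal_apply_eq, Matrix.sub_apply, Matrix.smul_apply, Matrix.one_apply_eq,
          smul_eq_mul, mul_one]
        push_cast; ring
      · simp [diagonal_apply_ne _ h, Matrix.one_apply_ne h]
    rw [h1, mul_sub, sub_mul]
    congr 1
    rw [mul_smul_comm, mul_one, smul_mul_assoc, hVV]
  rw [key, rank_conj hV]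
  congr 1
  ext i
  simp [sub_eq_zero, Complex.ofReal_eq_zero]

end Stmt12Aux

namespace Stmt12Aux

variable {n : ℕ}

lemma perm_ofFn {u w : Fin n → ℝ}
    (h : ∀ t : ℝ, (univ.filter fun i => u i = t).card = (univ.filter fun i => w i = t).card) :
    List.Perm (List.ofFn u) (List.ofFn w) := by
  rw [← Multiset.coe_eq_coe, ← Fin.univ_val_map, ← Fin.univ_val_map]
  refine Multiset.ext.mpr fun t => ?_
  rw [Multiset.count_map, Multiset.count_map]
  have e1 : ((univ.val : Multiset (Fin n)).filter fun a => t = u a).card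
      = (univ.filter fun i => u i = t).card := by
    rw [Finset.card, Finset.filter_val]
    congr 1
    exact Multiset.filter_congr fun a _ => by rw [eq_comm]
  have e2 : ((univ.val : Multiset (Fin n)).filter fun a => t = w a).card
      = (univ.filter fun i => w i = t).card := by
    rw [Finset.card, Finset.filter_val]
    congr 1
    exact Multiset.filter_congr fun a _ => by rw [eq_comm]
  rw [e1, e2, h]

lemma antitone_eq_of_count {u w : Fin n → ℝ} (hu : Antitone u) (hw : Antitone w)
    (h : ∀ t : ℝ, (univ.filter fun i => u i = t).card = (univ.filter fun i => w i = t).card) :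
    u = w := by
  haveI : IsAntisymm ℝ (fun a b => b ≤ a) := ⟨fun a b h1 h2 => le_antisymm h2 h1⟩
  have hperm := perm_ofFn h
  have hs1 : (List.ofFn u).Pairwise (fun a b => b ≤ a) :=
    List.pairwise_ofFn.mpr fun i j hij => hu hij.le
  have hs2 : (List.ofFn w).Pairwise (fun a b => b ≤ a) :=
    List.pairwise_ofFn.mpr fun i j hij => hw hij.le
  exact List.ofFn_inj.mp (List.Perm.eq_of_pairwise' hs1 hs2 hperm)

lemma desc_unique {Z : Matrix (Fin n) (Fin n) ℂ} (hZ : Z.IsHermitian)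
    {V : Matrix (Fin n) (Fin n) ℂ} (hV : star V * V = 1) {w : Fin n → ℝ} (hw : Antitone w)
    (hdec : Z = V * diagonal (fun i => (w i : ℂ)) * star V) :
    eigenvaluesDesc hZ = w := by
  obtain ⟨V', hV', hdec'⟩ := exists_desc_decomp hZ
  refine antitone_eq_of_count (antitone_eigenvaluesDesc hZ) hw fun t => ?_
  have h1 := rank_sub_smul hV' (eigenvaluesDesc hZ) t
  have h2 := rank_sub_smul hV w t
  rw [← hdec'] at h1
  rw [← hdec] at h2
  have hne : (univ.filter fun i => eigenvaluesDesc hZ i ≠ t).card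
      = (univ.filter fun i => w i ≠ t).card := h1.symm.trans h2
  have c1 := Finset.card_filter_add_card_filter_not
    (s := (univ : Finset (Fin n))) (p := fun i => eigenvaluesDesc hZ i = t)
  have c2 := Finset.card_filter_add_card_filter_not
    (s := (univ : Finset (Fin n))) (p := fun i => w i = t)
  simp only [ne_eq] at hne
  omega

end Stmt12Aux

namespace Stmt12Aux

variable {n m r : ℕ}

lemma r_lt_count_neg (M : Matrix (Fin n) (Fin n) ℂ →ₗ[ℝ] EuclideanSpace ℝ (Fin m))
    (hM : rComplete M r) {Z : Matrix (Fin n) (Fin n) ℂ} (hZ : Z.IsHermitian)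
    (hker : M Z = 0) (hZ0 : Z ≠ 0) :
    r < (univ.filter fun i => hZ.eigenvalues i < 0).card := by
  by_contra hle
  push_neg at hle
  set U := (hZ.eigenvectorUnitary : Matrix (Fin n) (Fin n) ℂ) with hUdef
  have hU : star U * U = 1 := mem_unitaryGroup_iff'.mp hZ.eigenvectorUnitary.2
  set p : Fin n → ℝ := fun i => max (hZ.eigenvalues i) 0 with hp
  set q : Fin n → ℝ := fun i => max (-(hZ.eigenvalues i)) 0 with hq
  set Zp := U * diagonal (fun i => (p i : ℂ)) * star U with hZp
  set Zq := U * diagonal (fun i => (q i : ℂ)) * star U with hZq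
  have hdiff : Z = Zp - Zq := by
    have h0 : Z = U * diagonal (fun i => ((hZ.eigenvalues i : ℝ) : ℂ)) * star U :=
      hZ.spectral_theorem
    rw [h0, hZp, hZq, ← sub_mul, ← mul_sub]
    congr 2
    rw [diagonal_sub]
    exact congrArg diagonal (funext fun i => by
      rw [← Complex.ofReal_sub, max_zero_sub_max_neg_zero_eq_self])
  have hpsd : ∀ f : Fin n → ℝ, (∀ i, 0 ≤ f i) →
      (U * diagonal (fun i => (f i : ℂ)) * star U).PosSemidef := by
    intro f hf
    have hd : (Matrix.diagonal fun i => (f i : ℂ)).PosSemidef :=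
      PosSemidef.diagonal fun i => by
        simpa using Complex.zero_le_real.mpr (hf i)
    simpa [star_eq_conjTranspose] using hd.mul_mul_conjTranspose_same U
  have hZpPSD : Zp.PosSemidef := hpsd p fun i => le_max_right _ _
  have hZqPSD : Zq.PosSemidef := hpsd q fun i => le_max_right _ _
  have hrank : Zq.rank ≤ r := by
    rw [hZq, rank_conj hU]
    refine le_trans (le_of_eq ?_) hle
    congr 1
    ext i
    simp only [mem_filter, mem_univ, true_and, ne_eq, Complex.ofReal_eq_zero, hq]
    constructor
    · intro h
      by_contra hnot
      push_neg at hnot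
      exact h (max_eq_right (neg_nonpos.mpr hnot))
    · intro h hmax
      have : 0 < -hZ.eigenvalues i := neg_pos.mpr h
      rw [max_eq_left this.le] at hmax
      exact this.ne' (by linarith [hmax])
  have hneq : Zq ≠ Zp := fun h => hZ0 (by rw [hdiff, ← h, sub_self])
  refine hM Zq Zp hZqPSD hrank hZpPSD hneq ?_
  have : M Zp - M Zq = 0 := by rw [← map_sub, ← hdiff, hker]
  linear_combination (norm := module) -this

end Stmt12Aux

namespace Stmt12Aux

variable {n m r : ℕ}

lemma count_perm (e : Fin n → ℝ) (π : Equiv.Perm (Fin n)) (P : ℝ → Prop) [DecidablePred P] :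
    (univ.filter fun i => P (e (π i))).card = (univ.filter fun i => P (e i)).card :=
  Finset.card_equiv π (fun i => by simp)

lemma eigDesc_neg (hr : 1 ≤ r) (hrn : r < n)
    (M : Matrix (Fin n) (Fin n) ℂ →ₗ[ℝ] EuclideanSpace ℝ (Fin m))
    (hM : rComplete M r) {Z : Matrix (Fin n) (Fin n) ℂ} (hZ : Z.IsHermitian)
    (hker : M Z = 0) (hZ0 : Z ≠ 0) :
    eigenvaluesDesc hZ ⟨n - r - 1, by have := hr; omega⟩ < 0 := by
  have hcount := r_lt_count_neg M hM hZ hker hZ0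
  have hcount' : r < (univ.filter fun i => eigenvaluesDesc hZ i < 0).card := by
    rw [eigenvaluesDesc_eq hZ]
    rw [show (univ.filter fun i => (hZ.eigenvalues ∘ (descPerm hZ)) i < 0)
        = univ.filter fun i => hZ.eigenvalues ((descPerm hZ) i) < 0 from rfl]
    rw [count_perm hZ.eigenvalues (descPerm hZ) (fun x => x < 0)]
    exact hcount
  by_contra hge
  push_neg at hge
  set idx : Fin n := ⟨n - r - 1, by have := hr; omega⟩ with hidx
  have hsub : (univ.filter fun i => eigenvaluesDesc hZ i < 0) ⊆ Finset.Ioi idx := by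
    intro j hj
    rw [mem_filter] at hj
    rw [Finset.mem_Ioi]
    by_contra hle
    push_neg at hle
    exact absurd (lt_of_le_of_lt (le_trans hge (antitone_eigenvaluesDesc hZ hle)) hj.2)
      (lt_irrefl _)
  have hcard := Finset.card_le_card hsub
  rw [Fin.card_Ioi] at hcard
  have : (idx : ℕ) = n - r - 1 := rfl
  omega

end Stmt12Aux

namespace Stmt12Aux

variable {n : ℕ}

lemma frobNorm_zero : frobNorm (0 : Matrix (Fin n) (Fin n) ℂ) = 0 := by
  simp [frobNorm]

lemma frobNorm_nonneg (X : Matrix (Fin n) (Fin n) ℂ) : 0 ≤ frobNorm X :=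
  Real.sqrt_nonneg _

lemma sum_normSq_nonneg (X : Matrix (Fin n) (Fin n) ℂ) :
    0 ≤ ∑ i, ∑ j, Complex.normSq (X i j) :=
  Finset.sum_nonneg fun i _ => Finset.sum_nonneg fun j _ => Complex.normSq_nonneg _

lemma frobNorm_eq_zero {X : Matrix (Fin n) (Fin n) ℂ} (h : frobNorm X = 0) : X = 0 := by
  have h0 : ∑ i, ∑ j, Complex.normSq (X i j) = 0 := by
    have := Real.sqrt_eq_zero (sum_normSq_nonneg X) |>.mp h
    exact this
  ext i j
  have h1 := (Finset.sum_eq_zero_iff_of_nonneg fun i _ =>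
    Finset.sum_nonneg fun j _ => Complex.normSq_nonneg (X i j)).mp h0 i (Finset.mem_univ i)
  have h2 := (Finset.sum_eq_zero_iff_of_nonneg fun j _ =>
    Complex.normSq_nonneg (X i j)).mp h1 j (Finset.mem_univ j)
  simpa using Complex.normSq_eq_zero.mp h2

lemma frobNorm_smul (c : ℝ) (hc : 0 ≤ c) (X : Matrix (Fin n) (Fin n) ℂ) :
    frobNorm (c • X) = c * frobNorm X := by
  unfold frobNorm
  have : ∀ i j, Complex.normSq ((c • X) i j) = c * c * Complex.normSq (X i j) := by
    intro i j
    rw [Matrix.smul_apply]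
    rw [show c • X i j = (c : ℂ) * X i j from Complex.real_smul]
    rw [Complex.normSq_mul, Complex.normSq_ofReal]
  simp_rw [this, ← Finset.mul_sum]
  rw [Real.sqrt_mul (mul_self_nonneg c), Real.sqrt_mul_self hc]

lemma continuous_frobNorm : Continuous (frobNorm (n := n)) := by
  unfold frobNorm
  apply Real.continuous_sqrt.comp
  refine continuous_finset_sum _ fun i _ => continuous_finset_sum _ fun j _ => ?_
  exact Complex.continuous_normSq.comp (continuous_id.matrix_elem i j)

lemma normSq_le_one_of_frob {X : Matrix (Fin n) (Fin n) ℂ} (h : frobNorm X = 1) (i j : Fin n) :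
    ‖X i j‖ ≤ 1 := by
  have hsum : ∑ a, ∑ b, Complex.normSq (X a b) = 1 := by
    have := congrArg (fun t => t ^ 2) h
    simpa [frobNorm, Real.sq_sqrt (sum_normSq_nonneg X)] using this
  have h1 : Complex.normSq (X i j) ≤ 1 := by
    calc Complex.normSq (X i j)
        ≤ ∑ b, Complex.normSq (X i b) :=
          Finset.single_le_sum (fun b _ => Complex.normSq_nonneg _) (Finset.mem_univ j)
      _ ≤ ∑ a, ∑ b, Complex.normSq (X a b) :=
          Finset.single_le_sum (fun a _ => Finset.sum_nonneg fun b _ => Complex.normSq_nonneg _)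
            (Finset.mem_univ i)
      _ = 1 := hsum
  have h2 : ‖X i j‖ ^ 2 ≤ 1 := by
    rwa [← Complex.normSq_eq_norm_sq]
  nlinarith [norm_nonneg (X i j)]

end Stmt12Aux

namespace Stmt12Aux

variable {n : ℕ}

lemma isCompact_entryBall (c : ℝ) :
    IsCompact {V : Matrix (Fin n) (Fin n) ℂ | ∀ i j, ‖V i j‖ ≤ c} := by
  have h : IsCompact ((Set.univ.pi fun _ : Fin n => Set.univ.pi
      fun _ : Fin n => Metric.closedBall (0 : ℂ) c) : Set (Matrix (Fin n) (Fin n) ℂ)) :=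
    isCompact_univ_pi fun _ => isCompact_univ_pi fun _ => isCompact_closedBall _ _
  have hset : {V : Matrix (Fin n) (Fin n) ℂ | ∀ i j, ‖V i j‖ ≤ c}
      = ((Set.univ.pi fun _ : Fin n => Set.univ.pi
        fun _ : Fin n => Metric.closedBall (0 : ℂ) c) : Set (Matrix (Fin n) (Fin n) ℂ)) := by
    ext V
    show (∀ i j, ‖V i j‖ ≤ c) ↔ ∀ i ∈ Set.univ, V i ∈ Set.univ.pi fun _ : Fin n => Metric.closedBall (0 : ℂ) c
    constructor
    · intro hb i _
      rw [Set.mem_pi]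
      intro j _
      simpa [Metric.mem_closedBall, dist_zero_right] using hb i j
    · intro hb i j
      have := Set.mem_pi.mp (hb i trivial) j trivial
      simpa [Metric.mem_closedBall, dist_zero_right] using this
  rw [hset]
  exact h

lemma isCompact_vecBall (c : ℝ) :
    IsCompact {v : Fin n → ℝ | ∀ i, |v i| ≤ c} := by
  have h : IsCompact (Set.univ.pi fun _ : Fin n => Metric.closedBall (0 : ℝ) c) :=
    isCompact_univ_pi fun _ => isCompact_closedBall _ _
  have hset : {v : Fin n → ℝ | ∀ i, |v i| ≤ c}
      = Set.univ.pi fun _ : Fin n => Metric.closedBall (0 : ℝ) c := by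
    ext v
    rw [Set.mem_pi]
    constructor
    · intro hb i _
      simpa [Metric.mem_closedBall, Real.dist_eq] using hb i
    · intro hb i
      simpa [Metric.mem_closedBall, Real.dist_eq] using hb i trivial
  rw [hset]
  exact h

instance : FirstCountableTopology (Matrix (Fin n) (Fin n) ℂ) :=
  (inferInstance : FirstCountableTopology (Fin n → Fin n → ℂ))

lemma unitary_entry_bound {V : Matrix (Fin n) (Fin n) ℂ} (hV : star V * V = 1) (i j : Fin n) :
    ‖V i j‖ ≤ 1 := by
  have hdiag : (star V * V) j j = 1 := by rw [hV, Matrix.one_apply_eq]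
  rw [Matrix.mul_apply] at hdiag
  have hterm : ∀ a, (star V) j a * V a j = (Complex.normSq (V a j) : ℂ) := by
    intro a
    rw [Matrix.star_apply, Complex.star_def, Complex.normSq_eq_conj_mul_self]
  rw [Finset.sum_congr rfl fun a _ => hterm a, ← Complex.ofReal_sum] at hdiag
  have hsum : ∑ a, Complex.normSq (V a j) = 1 := by exact_mod_cast hdiag
  have h1 : Complex.normSq (V i j) ≤ 1 := by
    calc Complex.normSq (V i j) ≤ ∑ a, Complex.normSq (V a j) :=
          Finset.single_le_sum (f := fun a => Complex.normSq (V a j))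
            (fun a _ => Complex.normSq_nonneg _) (Finset.mem_univ i)
      _ = 1 := hsum
  have h2 : ‖V i j‖ ^ 2 ≤ 1 := by
    rwa [← Complex.normSq_eq_norm_sq]
  nlinarith [norm_nonneg (V i j)]

lemma diag_entry_bound {Z V : Matrix (Fin n) (Fin n) ℂ} (hZb : ∀ i j, ‖Z i j‖ ≤ 1)
    (hVb : ∀ i j, ‖V i j‖ ≤ 1) (i : Fin n) :
    ‖(star V * Z * V) i i‖ ≤ (n : ℝ) * n := by
  rw [Matrix.mul_apply]
  refine le_trans (norm_sum_le _ _) ?_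
  have hb : ∀ b, ‖(star V * Z) i b * V b i‖ ≤ (n : ℝ) := by
    intro b
    rw [norm_mul]
    have h1 : ‖(star V * Z) i b‖ ≤ (n : ℝ) := by
      rw [Matrix.mul_apply]
      refine le_trans (norm_sum_le _ _) ?_
      calc ∑ a, ‖(star V) i a * Z a b‖ ≤ ∑ _a : Fin n, (1 : ℝ) := by
            refine Finset.sum_le_sum fun a _ => ?_
            rw [norm_mul, Matrix.star_apply, norm_star]
            exact mul_le_one₀ (hVb a i) (norm_nonneg _) (hZb a b)
        _ = (n : ℝ) := by simp
    calc ‖(star V * Z) i b‖ * ‖V b i‖ ≤ (n : ℝ) * 1 :=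
          mul_le_mul h1 (hVb b i) (norm_nonneg _) (by positivity)
      _ = (n : ℝ) := mul_one _
  calc ∑ b, ‖(star V * Z) i b * V b i‖ ≤ ∑ _b : Fin n, (n : ℝ) := Finset.sum_le_sum fun b _ => hb b
    _ = (n : ℝ) * n := by simp [mul_comm]

lemma diag_eq_conj {Z V : Matrix (Fin n) (Fin n) ℂ} (hV : star V * V = 1) (w : Fin n → ℝ)
    (hdec : Z = V * diagonal (fun i => (w i : ℂ)) * star V) :
    diagonal (fun i => (w i : ℂ)) = star V * Z * V := by
  rw [hdec]
  simp only [mul_assoc]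
  rw [hV, mul_one]
  rw [← mul_assoc, hV, one_mul]

end Stmt12Aux

namespace Stmt12Aux

lemma isHermitian_real_smul {n : ℕ} {Z : Matrix (Fin n) (Fin n) ℂ} (hZ : Z.IsHermitian)
    (c : ℝ) : (c • Z).IsHermitian := by
  have h : (c • Z)ᴴ = c • Zᴴ := by
    ext i j
    simp [Matrix.conjTranspose_apply, Matrix.smul_apply, star_smul]
  show (c • Z)ᴴ = c • Z
  rw [h, hZ.eq]

end Stmt12Aux

open Stmt12Aux

set_option maxHeartbeats 1000000 in
/-- if `M` is `r`-complete with nontrivial kernel, every nonzero Hermitian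
`Z ∈ Ker M` has `λ_{n−r}(Z) < 0`; moreover the maximum of `λ_{n−r}` over the unit sphere of
the kernel is attained and `κ := −max` is positive. -/
theorem stmt12 {n m r : ℕ} (hr : 1 ≤ r) (hrn : r < n)
    (M : Matrix (Fin n) (Fin n) ℂ →ₗ[ℝ] EuclideanSpace ℝ (Fin m))
    (hM : rComplete M r)
    (hker : ∃ Z : Matrix (Fin n) (Fin n) ℂ, Z.IsHermitian ∧ M Z = 0 ∧ Z ≠ 0) :
    (∀ (Z : Matrix (Fin n) (Fin n) ℂ) (hZ : Z.IsHermitian), M Z = 0 → Z ≠ 0 →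
        eigenvaluesDesc hZ ⟨n - r - 1, by omega⟩ < 0) ∧
    ∃ (Z₀ : Matrix (Fin n) (Fin n) ℂ) (hZ₀ : Z₀.IsHermitian),
      M Z₀ = 0 ∧ frobNorm Z₀ = 1 ∧
      (∀ (Z : Matrix (Fin n) (Fin n) ℂ) (hZ : Z.IsHermitian), M Z = 0 → frobNorm Z = 1 →
        eigenvaluesDesc hZ ⟨n - r - 1, by omega⟩ ≤
          eigenvaluesDesc hZ₀ ⟨n - r - 1, by omega⟩) ∧
      0 < -eigenvaluesDesc hZ₀ ⟨n - r - 1, by omega⟩ := by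
  classical
  have part1 : ∀ (Z : Matrix (Fin n) (Fin n) ℂ) (hZ : Z.IsHermitian), M Z = 0 → Z ≠ 0 →
      eigenvaluesDesc hZ ⟨n - r - 1, by omega⟩ < 0 := fun Z hZ h1 h2 =>
    eigDesc_neg hr hrn M hM hZ h1 h2
  refine ⟨part1, ?_⟩
  set idx : Fin n := ⟨n - r - 1, by omega⟩ with hidxdef
  set T : Set ℝ := {t | ∃ (Z : Matrix (Fin n) (Fin n) ℂ) (hZ : Z.IsHermitian),
    M Z = 0 ∧ frobNorm Z = 1 ∧ eigenvaluesDesc hZ idx = t} with hTdef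
  obtain ⟨W, hW, hWk, hW0⟩ := hker
  have hTne : T.Nonempty := by
    have hc : frobNorm W ≠ 0 := fun h => hW0 (frobNorm_eq_zero h)
    have hcpos : 0 < frobNorm W := lt_of_le_of_ne (frobNorm_nonneg W) (Ne.symm hc)
    refine ⟨_, (frobNorm W)⁻¹ • W, isHermitian_real_smul hW _, ?_, ?_, rfl⟩
    · rw [_root_.map_smul, hWk, smul_zero]
    · rw [frobNorm_smul _ (inv_nonneg.mpr hcpos.le), inv_mul_cancel₀ hc]
  have hne_zero : ∀ Z : Matrix (Fin n) (Fin n) ℂ, frobNorm Z = 1 → Z ≠ 0 := by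
    intro Z h hz
    rw [hz, frobNorm_zero] at h
    exact one_ne_zero h.symm
  have hTbdd : BddAbove T := by
    refine ⟨0, fun t ht => ?_⟩
    obtain ⟨Z, hZ, h1, h2, h3⟩ := ht
    exact h3 ▸ (part1 Z hZ h1 (hne_zero Z h2)).le
  obtain ⟨useq, humono, hutend, humem⟩ := exists_seq_tendsto_sSup hTne hTbdd
  simp only [hTdef, Set.mem_setOf_eq] at humem
  choose Zs hZs hMZ hfrob heig using humem
  choose Vs hVs hdecs using fun k => exists_desc_decomp (hZs k)
  set ws : ℕ → Fin n → ℝ := fun k => eigenvaluesDesc (hZs k) with hwsdef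
  set x : ℕ → Matrix (Fin n) (Fin n) ℂ × (Matrix (Fin n) (Fin n) ℂ × (Fin n → ℝ)) :=
    fun k => (Zs k, Vs k, ws k) with hxdef
  set K : Set (Matrix (Fin n) (Fin n) ℂ × (Matrix (Fin n) (Fin n) ℂ × (Fin n → ℝ))) :=
    {Z | ∀ i j, ‖Z i j‖ ≤ 1} ×ˢ
      ({V | ∀ i j, ‖V i j‖ ≤ 1} ×ˢ {v : Fin n → ℝ | ∀ i, |v i| ≤ (n : ℝ) * n}) with hKdef
  have hK : IsCompact K :=
    (isCompact_entryBall 1).prod ((isCompact_entryBall 1).prod (isCompact_vecBall _))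
  have hmemK : ∀ k, x k ∈ K := by
    intro k
    refine ⟨fun i j => normSq_le_one_of_frob (hfrob k) i j,
      fun i j => unitary_entry_bound (hVs k) i j, fun i => ?_⟩
    have hdiag := diag_eq_conj (hVs k) (ws k) (hdecs k)
    have hentry : ((ws k i : ℝ) : ℂ) = (star (Vs k) * Zs k * Vs k) i i := by
      rw [← hdiag, diagonal_apply_eq]
    have : |ws k i| = ‖(star (Vs k) * Zs k * Vs k) i i‖ := by
      rw [← hentry, Complex.norm_real, Real.norm_eq_abs]
    rw [this]
    exact diag_entry_bound (fun i j => normSq_le_one_of_frob (hfrob k) i j)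
      (fun i j => unitary_entry_bound (hVs k) i j) i
  obtain ⟨⟨Z₀, V₀, w₀⟩, hlim_mem, φ, hφ, hconv⟩ := hK.tendsto_subseq hmemK
  have hZt : Filter.Tendsto (fun k => Zs (φ k)) Filter.atTop (nhds Z₀) :=
    (continuous_fst.tendsto _).comp hconv
  have hVt : Filter.Tendsto (fun k => Vs (φ k)) Filter.atTop (nhds V₀) :=
    ((continuous_fst.comp continuous_snd).tendsto _).comp hconv
  have hwt : Filter.Tendsto (fun k => ws (φ k)) Filter.atTop (nhds w₀) :=
    ((continuous_snd.comp continuous_snd).tendsto _).comp hconv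
  have hZ₀ : Z₀.IsHermitian := by
    have h1 : Filter.Tendsto (fun k => (Zs (φ k))ᴴ) Filter.atTop (nhds Z₀ᴴ) :=
      (continuous_id.matrix_conjTranspose.tendsto _).comp hZt
    have h2 : (fun k => (Zs (φ k))ᴴ) = fun k => Zs (φ k) := funext fun k => (hZs (φ k)).eq
    rw [h2] at h1
    exact tendsto_nhds_unique h1 hZt
  have hMc : Continuous M := M.continuous_of_finiteDimensional
  have hMZ₀ : M Z₀ = 0 := by
    have h1 : Filter.Tendsto (fun k => M (Zs (φ k))) Filter.atTop (nhds (M Z₀)) :=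
      (hMc.tendsto _).comp hZt
    have h2 : (fun k => M (Zs (φ k))) = fun _ => (0 : EuclideanSpace ℝ (Fin m)) :=
      funext fun k => hMZ (φ k)
    rw [h2] at h1
    exact tendsto_nhds_unique h1 tendsto_const_nhds
  have hfrob₀ : frobNorm Z₀ = 1 := by
    have h1 : Filter.Tendsto (fun k => frobNorm (Zs (φ k))) Filter.atTop (nhds (frobNorm Z₀)) :=
      (continuous_frobNorm.tendsto _).comp hZt
    have h2 : (fun k => frobNorm (Zs (φ k))) = fun _ => (1 : ℝ) := funext fun k => hfrob (φ k)
    rw [h2] at h1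
    exact tendsto_nhds_unique h1 tendsto_const_nhds
  have hV₀ : star V₀ * V₀ = 1 := by
    have hc : Continuous fun V : Matrix (Fin n) (Fin n) ℂ => star V * V := by
      simp only [star_eq_conjTranspose]
      exact (continuous_id.matrix_conjTranspose).matrix_mul continuous_id
    have h1 : Filter.Tendsto (fun k => star (Vs (φ k)) * Vs (φ k)) Filter.atTop
        (nhds (star V₀ * V₀)) := (hc.tendsto _).comp hVt
    have h2 : (fun k => star (Vs (φ k)) * Vs (φ k))
        = fun _ => (1 : Matrix (Fin n) (Fin n) ℂ) := funext fun k => hVs (φ k)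
    rw [h2] at h1
    exact tendsto_nhds_unique h1 tendsto_const_nhds
  have hdec₀ : Z₀ = V₀ * diagonal (fun i => (w₀ i : ℂ)) * star V₀ := by
    have hFc : Continuous fun p : Matrix (Fin n) (Fin n) ℂ × (Fin n → ℝ) =>
        p.1 * diagonal (fun i => ((p.2 i : ℝ) : ℂ)) * star p.1 := by
      simp only [star_eq_conjTranspose]
      refine Continuous.matrix_mul (Continuous.matrix_mul continuous_fst ?_)
        (continuous_fst.matrix_conjTranspose)
      exact Continuous.matrix_diagonal <| continuous_pi fun i =>
        Complex.continuous_ofReal.comp ((continuous_apply i).comp continuous_snd)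
    have hpt : Filter.Tendsto (fun k => (Vs (φ k), ws (φ k))) Filter.atTop
        (nhds (V₀, w₀)) := hVt.prodMk_nhds hwt
    have h1 := (hFc.tendsto (V₀, w₀)).comp hpt
    have h1' : Filter.Tendsto (fun k => Zs (φ k)) Filter.atTop
        (nhds (V₀ * diagonal (fun i => ((w₀ i : ℝ) : ℂ)) * star V₀)) := by
      refine Filter.Tendsto.congr (fun k => ?_) h1
      exact (hdecs (φ k)).symm
    exact tendsto_nhds_unique hZt h1'
  have hw₀anti : Antitone w₀ := by
    intro i j hij
    have hti : Filter.Tendsto (fun k => ws (φ k) i) Filter.atTop (nhds (w₀ i)) :=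
      ((continuous_apply i).tendsto _).comp hwt
    have htj : Filter.Tendsto (fun k => ws (φ k) j) Filter.atTop (nhds (w₀ j)) :=
      ((continuous_apply j).tendsto _).comp hwt
    exact le_of_tendsto_of_tendsto' htj hti fun k =>
      antitone_eigenvaluesDesc (hZs (φ k)) hij
  have hw₀idx : w₀ idx = sSup T := by
    have ht1 : Filter.Tendsto (fun k => ws (φ k) idx) Filter.atTop (nhds (w₀ idx)) :=
      ((continuous_apply idx).tendsto _).comp hwt
    have h2 : (fun k => ws (φ k) idx) = fun k => useq (φ k) := funext fun k => heig (φ k)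
    rw [h2] at ht1
    exact tendsto_nhds_unique ht1 (hutend.comp hφ.tendsto_atTop)
  have hEq : eigenvaluesDesc hZ₀ = w₀ := desc_unique hZ₀ hV₀ hw₀anti hdec₀
  refine ⟨Z₀, hZ₀, hMZ₀, hfrob₀, ?_, ?_⟩
  · intro Z hZ h1 h2
    have hmem : eigenvaluesDesc hZ idx ∈ T := ⟨Z, hZ, h1, h2, rfl⟩
    have := le_csSup hTbdd hmem
    rw [show eigenvaluesDesc hZ₀ ⟨n - r - 1, by omega⟩ = sSup T by rw [hEq]; exact hw₀idx]
    exact this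
  · exact neg_pos.mpr (part1 Z₀ hZ₀ hMZ₀ (hne_zero Z₀ hfrob₀))
end
end
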